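/- arXiv:0905.1992 — 5 statements merged into one kernel-verified Lean document; each statement's English description precedes it below -/
import Mathlib

section
/- For every n ≥ 1 and every k ≥ 0, the k-th elementary symmetric polynomial in n variables evaluated at the Jucys–Murphy elements satisfies e_k(J_1,…,J_n) = Σ_{σ ∈ S(n), #(σ) = n−k} σ in ℚ[S(n)]; equivalently, e_k(J_1,…,J_n) = Σ_{μ : |μ| = k} c_μ(n), and in particular e_k(J_1,…,J_n) = 0 for k ≥ n. -/
/- The group algebra ℚ[S(n)] -/
noncomputable section
open scoped Classical

abbrev GA (n : ℕ) := MonoidAlgebra ℚ (Equiv.Perm (Fin n))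

/-- The Jucys–Murphy element `J_{i+1} = (1,i+1) + ⋯ + (i,i+1)` (zero-based index `i`),
so that `JM n 0 = J_1 = 0`. -/
def JM (n : ℕ) (i : Fin n) : GA n :=
  ∑ s ∈ Finset.univ.filter (fun s => s < i), MonoidAlgebra.single (Equiv.swap s i) (1 : ℚ)

/-- Evaluation of a (commutative) polynomial at the commuting family of Jucys–Murphy
elements `J_1, …, J_n`: each monomial is evaluated as the product `J_1^{m 1} ⋯ J_n^{m n}`
taken in the natural order of the indices. -/
def evalJM {n : ℕ} (f : MvPolynomial (Fin n) ℚ) : GA n :=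
  (AddMonoidAlgebra.coeff f).sum fun m c => c • ((List.finRange n).map (fun i => JM n i ^ m i)).prod

/-- The number of cycles of a permutation, counting fixed points. -/
def cycleCount {n : ℕ} (σ : Equiv.Perm (Fin n)) : ℕ :=
  σ.cycleType.card + (Finset.univ.filter (fun x => σ x = x)).card

/-- The reduced cycle type: subtract one from each part of the cycle type
(and fixed points, which are not parts of `Equiv.Perm.cycleType`, disappear). -/
def reducedCycleType {n : ℕ} (σ : Equiv.Perm (Fin n)) : Multiset ℕ :=
  σ.cycleType.map (· - 1)

/-- `e_k(J_1, …, J_n)`, the `k`-th elementary symmetric polynomial in `n` variables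
evaluated at the Jucys–Murphy elements. -/
def eEval (n k : ℕ) : GA n := evalJM (MvPolynomial.esymm (Fin n) ℚ k)

/-- `c_μ(n)`: the sum in ℚ[S(n)] of all permutations of reduced cycle type `μ`. -/
def cClass (n : ℕ) (μ : Multiset ℕ) : GA n :=
  ∑ σ ∈ Finset.univ.filter (fun σ : Equiv.Perm (Fin n) => reducedCycleType σ = μ),
    MonoidAlgebra.single σ (1 : ℚ)

/-! ### Auxiliary lemmas on cycle counts -/

open Equiv Equiv.Perm Finset

lemma fixedCard {n : ℕ} (σ : Equiv.Perm (Fin n)) :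
    (Finset.univ.filter (fun x => σ x = x)).card = n - σ.support.card := by
  have : (Finset.univ.filter (fun x => σ x = x)) = σ.supportᶜ := by
    ext x; simp [Equiv.Perm.mem_support]
  rw [this, Finset.card_compl, Fintype.card_fin]

lemma cycleCount_eq' {n : ℕ} (σ : Equiv.Perm (Fin n)) :
    cycleCount σ = σ.cycleType.card + (n - σ.cycleType.sum) := by
  rw [cycleCount, fixedCard, sum_cycleType]

lemma cycleType_sum_le {n : ℕ} (σ : Equiv.Perm (Fin n)) : σ.cycleType.sum ≤ n := by
  rw [sum_cycleType]
  simpa using Finset.card_le_univ σ.support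

lemma two_mul_card_le {n : ℕ} (σ : Equiv.Perm (Fin n)) :
    2 * σ.cycleType.card ≤ σ.cycleType.sum := by
  have := Multiset.card_nsmul_le_sum (fun x hx => two_le_of_mem_cycleType (σ := σ) hx)
  simpa [mul_comm] using this

lemma cycleCount_one {n : ℕ} : cycleCount (1 : Equiv.Perm (Fin n)) = n := by
  rw [cycleCount_eq', cycleType_one]; simp

lemma cycleCount_eq_n_iff {n : ℕ} {σ : Equiv.Perm (Fin n)} :
    cycleCount σ = n ↔ σ = 1 := by
  constructor
  · intro h
    have h1 := cycleType_sum_le σ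
    have h2 := two_mul_card_le σ
    rw [cycleCount_eq'] at h
    have : Multiset.card σ.cycleType = 0 := by omega
    rwa [Multiset.card_eq_zero, cycleType_eq_zero] at this
  · rintro rfl; exact cycleCount_one

lemma cycleCount_pos {n : ℕ} (hn : 1 ≤ n) (σ : Equiv.Perm (Fin n)) : 1 ≤ cycleCount σ := by
  rcases eq_or_ne σ 1 with rfl | h
  · rw [cycleCount_one]; exact hn
  · have : Multiset.card σ.cycleType ≠ 0 := by
      simpa [Multiset.card_eq_zero, cycleType_eq_zero] using h
    rw [cycleCount_eq']; omega

lemma cycleCount_swap_mul {n : ℕ} {σ : Equiv.Perm (Fin n)} {x : Fin n} (hx : σ x ≠ x) :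
    cycleCount (Equiv.swap x (σ x) * σ) = cycleCount σ + 1 := by
  set τ := Equiv.swap x (σ x) * σ with hτ
  by_cases hA : σ (σ x) = x
  · -- σ swaps x and σ x
    have hτx : τ x = x := by simp [hτ]
    have hτσx : τ (σ x) = σ x := by simp [hτ, hA]
    have hσ : σ = Equiv.swap x (σ x) * τ := by
      rw [hτ, ← mul_assoc, Equiv.swap_mul_self, one_mul]
    have hd : Equiv.Perm.Disjoint (Equiv.swap x (σ x)) τ := by
      intro y
      by_cases h1 : y = x
      · subst h1; exact Or.inr hτx
      by_cases h2 : y = σ x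
      · subst h2; exact Or.inr hτσx
      · exact Or.inl (Equiv.swap_apply_of_ne_of_ne h1 h2)
    have hct : σ.cycleType = {2} + τ.cycleType := by
      rw [hσ, hd.cycleType_mul]
      congr 1
      have := (isCycle_swap (Ne.symm hx)).cycleType
      rw [this, Equiv.Perm.support_swap (Ne.symm hx)]
      rw [Finset.card_insert_of_notMem (by simpa using Ne.symm hx)]
      simp
    have hsum := cycleType_sum_le σ
    rw [cycleCount_eq', cycleCount_eq', hct]
    simp only [Multiset.card_add, Multiset.sum_add, Multiset.card_singleton,
      Multiset.sum_singleton]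
    rw [hct] at hsum
    simp only [Multiset.sum_add, Multiset.sum_singleton] at hsum
    omega
  · -- the cycle of x has length ≥ 3
    set c := σ.cycleOf x with hc
    set ρ := c⁻¹ * σ with hρ
    have hσcρ : σ = c * ρ := by rw [hρ]; group
    have hcx : c x = σ x := cycleOf_apply_self σ x
    have hccx : c (c x) ≠ x := by
      rw [hcx, cycleOf_apply_apply_self]
      exact hA
    have hcxne : c x ≠ x := by rw [hcx]; exact hx
    have hcyc : c.IsCycle := isCycle_cycleOf σ hx
    have hd : Equiv.Perm.Disjoint c ρ := by
      intro y
      by_cases h : σ.SameCycle x y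
      · right
        have : c y = σ y := h.cycleOf_apply
        rw [hρ]
        simp only [Equiv.Perm.mul_apply]
        rw [← this]; exact c.symm_apply_apply y
      · left; exact cycleOf_apply_of_not_sameCycle h
    set c' := Equiv.swap x (c x) * c with hc'
    have hτeq : τ = c' * ρ := by
      rw [hτ, hc', ← hcx, hσcρ, mul_assoc]
    have hcyc' : c'.IsCycle := hcyc.swap_mul hcxne hccx
    have hsupp' : c'.support = c.support \ {x} := support_swap_mul_eq c x hccx
    have hd' : Equiv.Perm.Disjoint c' ρ := by
      intro y
      rcases hd y with h | h
      · left
        have : y ∉ c'.support := by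
          rw [hsupp']
          simp [Equiv.Perm.mem_support, h]
        rwa [Equiv.Perm.notMem_support] at this
      · right; exact h
    have hxmem : x ∈ c.support := by rw [Equiv.Perm.mem_support]; exact hcxne
    have hcard' : c'.support.card = c.support.card - 1 := by
      rw [hsupp', Finset.sdiff_singleton_eq_erase, Finset.card_erase_of_mem hxmem]
    have hctσ : σ.cycleType = {c.support.card} + ρ.cycleType := by
      rw [hσcρ, hd.cycleType_mul, hcyc.cycleType]
    have hctτ : τ.cycleType = {c'.support.card} + ρ.cycleType := by
      rw [hτeq, hd'.cycleType_mul, hcyc'.cycleType]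
    have hsum := cycleType_sum_le σ
    rw [hctσ] at hsum
    simp only [Multiset.sum_add, Multiset.sum_singleton] at hsum
    rw [cycleCount_eq', cycleCount_eq', hctσ, hctτ, hcard']
    simp only [Multiset.card_add, Multiset.sum_add, Multiset.card_singleton,
      Multiset.sum_singleton]
    have h2c : 2 ≤ c.support.card := hcyc.two_le_card_support
    omega

lemma cycleCount_conj {n : ℕ} (π σ : Equiv.Perm (Fin n)) :
    cycleCount (π * σ * π⁻¹) = cycleCount σ := by
  rw [cycleCount_eq', cycleCount_eq', cycleType_conj]

lemma cycleCount_mul_swap {n : ℕ} {τ : Equiv.Perm (Fin n)} {s t : Fin n}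
    (hst : s ≠ t) (ht : τ t = t) :
    cycleCount (τ * Equiv.swap s t) + 1 = cycleCount τ := by
  set σ := τ * Equiv.swap s t with hσ
  have hσs : σ s = t := by simp [hσ, ht]
  have hσsne : σ s ≠ s := by rw [hσs]; exact (Ne.symm hst)
  have key := cycleCount_swap_mul hσsne
  rw [hσs] at key
  have : Equiv.swap s t * σ = Equiv.swap s t * τ * (Equiv.swap s t)⁻¹ := by
    rw [hσ, Equiv.swap_inv, mul_assoc]
  rw [this, cycleCount_conj] at key
  omega

/-! ### Expanding `eEval` as a sum of ordered products over subsets -/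

def prodJM {n : ℕ} (A : Finset (Fin n)) : GA n :=
  (((List.finRange n).filter (fun i => decide (i ∈ A))).map (JM n)).prod

lemma evalJM_add {n : ℕ} (f g : MvPolynomial (Fin n) ℚ) :
    evalJM (f + g) = evalJM f + evalJM g := by
  unfold evalJM
  apply Finsupp.sum_add_index'
  · intro m; rw [zero_smul]
  · intro m b c; rw [add_smul]

lemma evalJM_zero {n : ℕ} : evalJM (0 : MvPolynomial (Fin n) ℚ) = 0 := by
  unfold evalJM
  exact Finsupp.sum_zero_index

lemma evalJM_sum {n : ℕ} {α : Type*} (s : Finset α) (g : α → MvPolynomial (Fin n) ℚ) :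
    evalJM (∑ a ∈ s, g a) = ∑ a ∈ s, evalJM (g a) := by
  classical
  induction s using Finset.induction_on with
  | empty => simp [evalJM_zero]
  | insert _ _ h ih => rw [Finset.sum_insert h, Finset.sum_insert h, evalJM_add, ih]

lemma evalJM_monomial {n : ℕ} (m : Fin n →₀ ℕ) :
    evalJM (MvPolynomial.monomial m (1 : ℚ)) =
      ((List.finRange n).map (fun i => JM n i ^ m i)).prod := by
  unfold evalJM
  rw [MvPolynomial.sum_monomial_eq, one_smul]
  rw [zero_smul]

lemma list_prod_map_ite {α M : Type*} [Monoid M] (p : α → Prop) [DecidablePred p] (f : α → M) :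
    ∀ l : List α,
      (l.map (fun i => if p i then f i else 1)).prod
        = ((l.filter (fun i => decide (p i))).map f).prod := by
  intro l
  induction l with
  | nil => rfl
  | cons x l ih =>
      by_cases h : p x <;>
        simp [List.filter_cons, h, ih, List.prod_cons]

lemma eEval_eq_sum_prodJM (n k : ℕ) :
    eEval n k = ∑ A ∈ Finset.powersetCard k (Finset.univ : Finset (Fin n)), prodJM A := by
  rw [eEval, MvPolynomial.esymm_eq_sum_monomial, evalJM_sum]
  apply Finset.sum_congr rfl
  intro A _
  rw [evalJM_monomial]
  have hm : ∀ j : Fin n, (∑ i ∈ A, Finsupp.single i 1) j = if j ∈ A then 1 else 0 := by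
    intro j
    rw [Finset.sum_apply']
    simp [Finsupp.single_apply, eq_comm]
  have : (fun i => JM n i ^ (∑ i ∈ A, Finsupp.single i 1) i)
      = fun i => if i ∈ A then JM n i else 1 := by
    funext i
    rw [hm i]
    by_cases h : i ∈ A <;> simp [h]
  rw [this, list_prod_map_ite (fun i => i ∈ A) (JM n)]
  rfl

lemma filter_insert_max {n : ℕ} (A : Finset (Fin n)) (t : Fin n) (hA : ∀ x ∈ A, x < t) :
    ∀ l : List (Fin n), l.Pairwise (· < ·) →
      (l.filter (fun i => decide (i ∈ insert t A))) =
        (l.filter (fun i => decide (i ∈ A))) ++ (if t ∈ l then [t] else []) := by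
  intro l
  induction l with
  | nil => simp
  | cons x l ih =>
      intro hp
      have hp' := (List.pairwise_cons.mp hp).2
      have hx := (List.pairwise_cons.mp hp).1
      by_cases hxt : x = t
      · subst hxt
        have hgt : ∀ y ∈ l, ¬ (y ∈ insert x A) := by
          intro y hy hmem
          rcases Finset.mem_insert.mp hmem with rfl | hmem
          · exact absurd (hx y hy) (lt_irrefl _)
          · exact absurd ((hA y hmem).trans (hx y hy)) (lt_irrefl _)
        have h1 : l.filter (fun i => decide (i ∈ insert x A)) = [] := by
          rw [List.filter_eq_nil_iff]
          intro y hy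
          simpa using hgt y hy
        have h2 : l.filter (fun i => decide (i ∈ A)) = [] := by
          rw [List.filter_eq_nil_iff]
          intro y hy
          simpa using fun h => hgt y hy (Finset.mem_insert_of_mem h)
        have hxA : x ∉ A := fun h => absurd (hA x h) (lt_irrefl _)
        rw [List.filter_cons, List.filter_cons, h1, h2]
        simp [hxA]
      · have hmem : (x ∈ insert t A) = (x ∈ A) := by
          simp [Finset.mem_insert, hxt]
        rw [List.filter_cons, List.filter_cons, ih hp']
        have hmem2 : (decide (x ∈ insert t A)) = (decide (x ∈ A)) := by
          simp [Finset.mem_insert, hxt]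
        rw [hmem2]
        have htl : (t ∈ x :: l) ↔ (t ∈ l) := by
          rw [List.mem_cons]
          exact or_iff_right (fun h : t = x => hxt h.symm)
        by_cases h : x ∈ A <;> by_cases h2 : t ∈ l <;>
          simp [h, h2, htl, List.cons_append]

lemma prodJM_empty {n : ℕ} : prodJM (∅ : Finset (Fin n)) = 1 := by
  unfold prodJM
  simp

lemma prodJM_insert_max {n : ℕ} (A : Finset (Fin n)) (t : Fin n) (hA : ∀ x ∈ A, x < t) :
    prodJM (insert t A) = prodJM A * JM n t := by
  unfold prodJM
  rw [filter_insert_max A t hA _ (List.pairwise_lt_finRange n)]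
  simp [List.mem_finRange]

/-! ### The main induction -/

lemma filter_k0 (n b : ℕ) :
    Finset.univ.filter (fun σ : Equiv.Perm (Fin n) =>
      (∀ i : Fin n, b ≤ i.1 → σ i = i) ∧ cycleCount σ + 0 = n) = {1} := by
  ext σ
  simp only [Finset.mem_filter, Finset.mem_univ, true_and, Finset.mem_singleton, add_zero]
  constructor
  · rintro ⟨-, h2⟩; exact cycleCount_eq_n_iff.mp h2
  · rintro rfl; exact ⟨fun i _ => rfl, cycleCount_one⟩

lemma main_sum (n : ℕ) : ∀ b, b ≤ n → ∀ k : ℕ,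
    ∑ A ∈ Finset.powersetCard k (Finset.univ.filter (fun i : Fin n => i.1 < b)), prodJM A
      = ∑ σ ∈ Finset.univ.filter (fun σ : Equiv.Perm (Fin n) =>
          (∀ i : Fin n, b ≤ i.1 → σ i = i) ∧ cycleCount σ + k = n),
          MonoidAlgebra.single σ (1 : ℚ) := by
  intro b
  induction b with
  | zero =>
      intro _ k
      cases k with
      | zero =>
          rw [Finset.powersetCard_zero, Finset.sum_singleton, prodJM_empty, filter_k0,
            Finset.sum_singleton, ← MonoidAlgebra.one_def]
      | succ k =>
          have h1 : Finset.univ.filter (fun i : Fin n => i.1 < 0) = ∅ := by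
            apply Finset.eq_empty_of_forall_notMem; simp
          have h2 : Finset.powersetCard (k+1) (∅ : Finset (Fin n)) = ∅ := by
            apply Finset.eq_empty_of_forall_notMem
            intro A hA
            rw [Finset.mem_powersetCard] at hA
            have := Finset.card_le_card hA.1
            simp [hA.2] at this
          have h3 : Finset.univ.filter (fun σ : Equiv.Perm (Fin n) =>
              (∀ i : Fin n, 0 ≤ i.1 → σ i = i) ∧ cycleCount σ + (k+1) = n) = ∅ := by
            apply Finset.eq_empty_of_forall_notMem
            intro σ hσ
            rw [Finset.mem_filter] at hσ
            have hσ1 : σ = 1 := by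
              ext i
              exact congrArg Fin.val (hσ.2.1 i (Nat.zero_le _))
            rw [hσ1, cycleCount_one] at hσ
            omega
          rw [h1, h2, h3]
          simp
  | succ b ih =>
      intro hb k
      have hb' : b ≤ n := Nat.le_of_succ_le hb
      have hbn : b < n := hb
      set t : Fin n := ⟨b, hbn⟩ with hts
      have hSsucc : Finset.univ.filter (fun i : Fin n => i.1 < b+1)
          = insert t (Finset.univ.filter (fun i : Fin n => i.1 < b)) := by
        ext i
        simp only [Finset.mem_filter, Finset.mem_univ, true_and, Finset.mem_insert]
        rw [Fin.ext_iff]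
        simp only [hts]
        omega
      have htS : t ∉ Finset.univ.filter (fun i : Fin n => i.1 < b) := by simp [hts]
      cases k with
      | zero =>
          rw [Finset.powersetCard_zero, Finset.sum_singleton, prodJM_empty, filter_k0,
            Finset.sum_singleton, ← MonoidAlgebra.one_def]
      | succ k =>
          set S := Finset.univ.filter (fun i : Fin n => i.1 < b) with hS
          have hdisj : Disjoint (Finset.powersetCard (k+1) S)
              ((Finset.powersetCard k S).image (insert t)) := by
            rw [Finset.disjoint_left]
            intro A hA hA'
            rw [Finset.mem_powersetCard] at hA
            obtain ⟨B, hB, rfl⟩ := Finset.mem_image.mp hA'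
            exact htS (hA.1 (Finset.mem_insert_self _ _))
          have hinj : ∀ A ∈ Finset.powersetCard k S, ∀ A' ∈ Finset.powersetCard k S,
              insert t A = insert t A' → A = A' := by
            intro A hA A' hA' h
            have htA : t ∉ A := fun hmem => htS ((Finset.mem_powersetCard.mp hA).1 hmem)
            have htA' : t ∉ A' := fun hmem => htS ((Finset.mem_powersetCard.mp hA').1 hmem)
            rw [← Finset.erase_insert htA, h, Finset.erase_insert htA']
          rw [hSsucc, Finset.powersetCard_succ_insert htS, Finset.sum_union hdisj,
            Finset.sum_image hinj]
          have hins : ∀ A ∈ Finset.powersetCard k S, prodJM (insert t A) = prodJM A * JM n t := by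
            intro A hA
            apply prodJM_insert_max
            intro x hx
            have := (Finset.mem_powersetCard.mp hA).1 hx
            rw [hS, Finset.mem_filter] at this
            rw [Fin.lt_def]
            exact this.2
          rw [Finset.sum_congr rfl hins, ← Finset.sum_mul, ih hb' (k+1), ih hb' k]
          -- now expand `(∑ τ, single τ) * JM n t` and match the two pieces
          rw [← Finset.sum_filter_add_sum_filter_not
            (Finset.univ.filter (fun σ : Equiv.Perm (Fin n) =>
              (∀ i : Fin n, b+1 ≤ i.1 → σ i = i) ∧ cycleCount σ + (k+1) = n))
            (fun σ => σ t = t)]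
          congr 1
          · -- permutations fixing t
            apply Finset.sum_congr _ (fun _ _ => rfl)
            ext σ
            simp only [Finset.mem_filter, Finset.mem_univ, true_and]
            constructor
            · rintro ⟨h1, h2⟩
              exact ⟨⟨fun i hi => h1 i (by omega), h2⟩, h1 t (by simp [hts])⟩
            · rintro ⟨⟨h1, h2⟩, h3⟩
              refine ⟨fun i hi => ?_, h2⟩
              rcases Nat.eq_or_lt_of_le hi with h | h
              · have : i = t := by rw [Fin.ext_iff]; simpa [hts] using h.symm
                rw [this]; exact h3
              · exact h1 i h
          · -- permutations moving t
            rw [JM, Finset.sum_mul_sum, ← Finset.sum_product']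
            refine Finset.sum_nbij' (fun p => p.1 * Equiv.swap p.2 t)
              (fun σ => (σ * Equiv.swap (σ⁻¹ t) t, σ⁻¹ t)) ?_ ?_ ?_ ?_ ?_
            · -- maps to
              intro p hp
              show p.1 * Equiv.swap p.2 t ∈ _
              rw [Finset.mem_product, Finset.mem_filter, Finset.mem_filter] at hp
              obtain ⟨⟨-, hQ1, hQ2⟩, -, hs⟩ := hp
              have hst : p.2 ≠ t := ne_of_lt hs
              have hp2b : p.2.1 < b := by rw [Fin.lt_def] at hs; simpa [hts] using hs
              have hτt : p.1 t = t := hQ1 t (by simp [hts])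
              have hσt : (p.1 * Equiv.swap p.2 t) t = p.1 p.2 := by
                simp [Equiv.Perm.mul_apply]
              rw [Finset.mem_filter, Finset.mem_filter]
              refine ⟨⟨Finset.mem_univ _, fun i hi => ?_, ?_⟩, ?_⟩
              · have hi1 : i ≠ p.2 := by
                  intro hcon; rw [hcon] at hi; omega
                have hi2 : i ≠ t := by
                  intro hcon; rw [hcon] at hi; simp [hts] at hi
                simp only [Equiv.Perm.mul_apply]
                rw [Equiv.swap_apply_of_ne_of_ne hi1 hi2]
                exact hQ1 i (by omega)
              · have h := cycleCount_mul_swap hst hτt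
                omega
              · rw [hσt]
                intro hcon
                have : p.1 p.2 = p.1 t := by rw [hcon, hτt]
                exact hst (p.1.injective this)
            · -- maps from
              intro σ hσ
              show ((σ * Equiv.swap (σ⁻¹ t) t, σ⁻¹ t) : Equiv.Perm (Fin n) × Fin n) ∈ _
              rw [Finset.mem_filter, Finset.mem_filter] at hσ
              obtain ⟨⟨-, hP1, hP2⟩, hσt⟩ := hσ
              set s0 := σ⁻¹ t with hs0
              have hσs0 : σ s0 = t := σ.apply_symm_apply t
              have hs0t : s0 ≠ t := fun h => hσt (h ▸ hσs0)
              have hs0b : s0.1 < b := by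
                by_contra hcon
                push_neg at hcon
                rcases Nat.eq_or_lt_of_le hcon with h | h
                · exact hs0t (by rw [Fin.ext_iff]; simpa [hts] using h.symm)
                · have := hP1 s0 h
                  rw [hσs0] at this
                  exact hs0t this.symm
              have hτt : (σ * Equiv.swap s0 t) t = t := by
                simp only [Equiv.Perm.mul_apply, Equiv.swap_apply_right]
                exact hσs0
              rw [Finset.mem_product, Finset.mem_filter, Finset.mem_filter]
              refine ⟨⟨Finset.mem_univ _, fun i hi => ?_, ?_⟩, Finset.mem_univ _, ?_⟩
              · show (σ * Equiv.swap s0 t) i = i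
                rcases Nat.eq_or_lt_of_le hi with h | h
                · have : i = t := by rw [Fin.ext_iff]; simpa [hts] using h.symm
                  rw [this]; exact hτt
                · have hi1 : i ≠ s0 := by
                    intro hcon; rw [hcon] at h; omega
                  have hi2 : i ≠ t := by
                    intro hcon; rw [hcon] at h; simp [hts] at h
                  simp only [Equiv.Perm.mul_apply]
                  rw [Equiv.swap_apply_of_ne_of_ne hi1 hi2]
                  exact hP1 i (by omega)
              · show cycleCount (σ * Equiv.swap s0 t) + k = n
                have h := cycleCount_mul_swap hs0t hτt
                have hττ : (σ * Equiv.swap s0 t) * Equiv.swap s0 t = σ := by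
                  rw [mul_assoc, Equiv.swap_mul_self, mul_one]
                rw [hττ] at h
                omega
              · show s0 < t
                rw [Fin.lt_def]; simpa [hts] using hs0b
            · -- left inverse
              intro p hp
              show ((p.1 * Equiv.swap p.2 t * Equiv.swap ((p.1 * Equiv.swap p.2 t)⁻¹ t) t,
                (p.1 * Equiv.swap p.2 t)⁻¹ t) : Equiv.Perm (Fin n) × Fin n) = p
              rw [Finset.mem_product, Finset.mem_filter, Finset.mem_filter] at hp
              obtain ⟨⟨-, hQ1, hQ2⟩, -, hs⟩ := hp
              have hτt : p.1 t = t := hQ1 t (by simp [hts])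
              have hσp2 : (p.1 * Equiv.swap p.2 t) p.2 = t := by
                simp only [Equiv.Perm.mul_apply, Equiv.swap_apply_left]
                exact hτt
              have hinv : (p.1 * Equiv.swap p.2 t)⁻¹ t = p.2 := by
                rw [Equiv.Perm.inv_eq_iff_eq]
                exact hσp2.symm
              have hfst : (p.1 * Equiv.swap p.2 t) * Equiv.swap ((p.1 * Equiv.swap p.2 t)⁻¹ t) t
                  = p.1 := by
                rw [hinv, mul_assoc, Equiv.swap_mul_self, mul_one]
              exact Prod.ext hfst hinv
            · -- right inverse
              intro σ hσ
              show σ * Equiv.swap (σ⁻¹ t) t * Equiv.swap (σ⁻¹ t) t = σ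
              rw [mul_assoc, Equiv.swap_mul_self, mul_one]
            · -- summands agree
              intro p hp
              show MonoidAlgebra.single p.1 (1:ℚ) * MonoidAlgebra.single (Equiv.swap p.2 t) (1:ℚ)
                = MonoidAlgebra.single (p.1 * Equiv.swap p.2 t) (1:ℚ)
              rw [MonoidAlgebra.single_mul_single, one_mul]

/-! ### Reduced cycle type bookkeeping -/

lemma reduced_sum_add_card {n : ℕ} (σ : Equiv.Perm (Fin n)) :
    (reducedCycleType σ).sum + σ.cycleType.card = σ.cycleType.sum := by
  rw [reducedCycleType]
  have : ∀ m : Multiset ℕ, (∀ x ∈ m, 1 ≤ x) → (m.map (· - 1)).sum + Multiset.card m = m.sum := by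
    intro m
    induction m using Multiset.induction_on with
    | empty => simp
    | cons a m ih =>
        intro h
        simp only [Multiset.map_cons, Multiset.sum_cons, Multiset.card_cons]
        have ha : 1 ≤ a := h a (Multiset.mem_cons_self a m)
        have := ih (fun x hx => h x (Multiset.mem_cons_of_mem hx))
        omega
  exact this _ (fun x hx => le_trans one_le_two (two_le_of_mem_cycleType hx))

lemma reduced_pos {n : ℕ} (σ : Equiv.Perm (Fin n)) :
    ∀ i ∈ reducedCycleType σ, 0 < i := by
  intro i hi
  rw [reducedCycleType, Multiset.mem_map] at hi
  obtain ⟨j, hj, rfl⟩ := hi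
  have := two_le_of_mem_cycleType hj
  omega

lemma cond_iff_reduced_sum {n k : ℕ} (σ : Equiv.Perm (Fin n)) :
    cycleCount σ + k = n ↔ (reducedCycleType σ).sum = k := by
  have h1 := cycleCount_eq' σ
  have h2 := cycleType_sum_le σ
  have h3 := reduced_sum_add_card σ
  have h4 := two_mul_card_le σ
  omega

/-! ### The theorem -/

/-- Jucys' theorem: `e_k(J_1,…,J_n) = Σ_{σ : #(σ) = n − k} σ = Σ_{|μ| = k} c_μ(n)`,
and in particular `e_k(J_1,…,J_n) = 0` for `k ≥ n`. -/
theorem elementary_symmetric_in_JM_eq_class_sums (n k : ℕ) (hn : 1 ≤ n) :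
    (eEval n k =
      ∑ σ ∈ Finset.univ.filter (fun σ : Equiv.Perm (Fin n) => cycleCount σ + k = n),
        MonoidAlgebra.single σ (1 : ℚ)) ∧
    (eEval n k = ∑ μ : Nat.Partition k, cClass n μ.parts) ∧
    (n ≤ k → eEval n k = 0) := by
  have huniv : Finset.univ.filter (fun i : Fin n => i.1 < n) = Finset.univ := by
    ext i; simp [i.isLt]
  have hmain := main_sum n n le_rfl k
  rw [huniv] at hmain
  have hfset : Finset.univ.filter (fun σ : Equiv.Perm (Fin n) =>
        (∀ i : Fin n, n ≤ i.1 → σ i = i) ∧ cycleCount σ + k = n)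
      = Finset.univ.filter (fun σ : Equiv.Perm (Fin n) => cycleCount σ + k = n) := by
    ext σ
    simp only [Finset.mem_filter, Finset.mem_univ, true_and, and_iff_right_iff_imp]
    intro _ i hi
    exact absurd i.isLt (by omega)
  have h1 : eEval n k =
      ∑ σ ∈ Finset.univ.filter (fun σ : Equiv.Perm (Fin n) => cycleCount σ + k = n),
        MonoidAlgebra.single σ (1 : ℚ) := by
    rw [eEval_eq_sum_prodJM, hmain, hfset]
  refine ⟨h1, ?_, ?_⟩
  · -- sum over partitions
    rw [h1]
    have hmaps : ∀ σ ∈ Finset.univ.filter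
        (fun σ : Equiv.Perm (Fin n) => cycleCount σ + k = n),
        (fun σ : Equiv.Perm (Fin n) =>
          if h : (reducedCycleType σ).sum = k ∧ ∀ i ∈ reducedCycleType σ, 0 < i then
            (⟨reducedCycleType σ, fun {i} hi => h.2 i hi, h.1⟩ : Nat.Partition k)
          else Nat.Partition.indiscrete k) σ ∈ (Finset.univ : Finset (Nat.Partition k)) :=
      fun σ _ => Finset.mem_univ _
  
    rw [← Finset.sum_fiberwise_of_maps_to hmaps (fun σ => MonoidAlgebra.single σ (1 : ℚ))]
    apply Finset.sum_congr rfl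
    intro μ _
    rw [cClass]
    apply Finset.sum_congr _ (fun _ _ => rfl)
    ext σ
    simp only [Finset.mem_filter, Finset.mem_univ, true_and]
    constructor
    · rintro ⟨hcc, hg⟩
      have hred : (reducedCycleType σ).sum = k := (cond_iff_reduced_sum σ).mp hcc
      rw [dif_pos ⟨hred, reduced_pos σ⟩] at hg
      rw [← hg]
    · intro hg
      have hred : (reducedCycleType σ).sum = k := by
        rw [hg]; exact μ.parts_sum
      refine ⟨(cond_iff_reduced_sum σ).mpr hred, ?_⟩
      rw [dif_pos ⟨hred, reduced_pos σ⟩]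
      apply Nat.Partition.ext
      exact hg
  · -- vanishing for k ≥ n
    intro hk
    rw [h1]
    have : Finset.univ.filter (fun σ : Equiv.Perm (Fin n) => cycleCount σ + k = n) = ∅ := by
      apply Finset.eq_empty_of_forall_notMem
      intro σ hσ
      rw [Finset.mem_filter] at hσ
      have := cycleCount_pos hn σ
      omega
    rw [this, Finset.sum_empty]
end
end

section
/- For every n ≥ 1 and every scalar z, the identity (z + J_1)(z + J_2)⋯(z + J_n) = Σ_{σ ∈ S(n)} z^{#(σ)} σ holds in ℚ[S(n)] (equivalently, it holds as an identity of polynomials in an indeterminate z with coefficients in ℚ[S(n)]). -/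
noncomputable section
open scoped Classical

open Equiv Finset

lemma cycleCount_mul_swap_s2 {n : ℕ} (σ : Equiv.Perm (Fin n)) (a b : Fin n)
    (hb : σ b = b) (hab : a ≠ b) :
    cycleCount (σ * Equiv.swap a b) + 1 = cycleCount σ := by
  have hinj := σ.injective
  have hσab : σ a ≠ b := fun h => hab (hinj (h.trans hb.symm))
  have hfix : ∀ x : Fin n, ((σ * Equiv.swap a b) x = x ↔ σ x = x ∧ x ≠ a ∧ x ≠ b) := by
    intro x
    rcases eq_or_ne x a with rfl | hxa
    · simp [Equiv.Perm.mul_apply, Equiv.swap_apply_left, hb, hab.symm]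
    rcases eq_or_ne x b with rfl | hxb
    · simp [Equiv.Perm.mul_apply, Equiv.swap_apply_right, hσab, hxa]
    · simp [Equiv.Perm.mul_apply, Equiv.swap_apply_of_ne_of_ne hxa hxb, hxa, hxb]
  by_cases ha : σ a = a
  · -- disjoint case
    have hdisj : Equiv.Perm.Disjoint σ (Equiv.swap a b) := by
      intro x
      rcases eq_or_ne x a with rfl | hxa
      · exact Or.inl ha
      rcases eq_or_ne x b with rfl | hxb
      · exact Or.inl hb
      · exact Or.inr (Equiv.swap_apply_of_ne_of_ne hxa hxb)
    have hct : (σ * Equiv.swap a b).cycleType = σ.cycleType + (Equiv.swap a b).cycleType :=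
      hdisj.cycleType_mul
    have hctsw : (Equiv.swap a b).cycleType = [2] := by
      rw [(Equiv.Perm.isCycle_swap hab).cycleType, Equiv.Perm.card_support_swap hab]; rfl
    have haS : a ∈ Finset.univ.filter (fun x => σ x = x) := by simp [ha]
    have hbS : b ∈ (Finset.univ.filter (fun x => σ x = x)).erase a := by
      simp [hb, hab.symm]
    have hfixset : Finset.univ.filter (fun x => (σ * Equiv.swap a b) x = x)
        = ((Finset.univ.filter (fun x => σ x = x)).erase a).erase b := by
      ext x
      simp only [Finset.mem_filter, Finset.mem_univ, true_and, Finset.mem_erase, hfix x]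
      tauto
    have h1 := Finset.card_erase_of_mem hbS
    have h2 := Finset.card_erase_of_mem haS
    have h3 : 1 ≤ ((Finset.univ.filter (fun x => σ x = x)).erase a).card :=
      Finset.card_pos.mpr ⟨b, hbS⟩
    unfold cycleCount
    rw [hfixset, hct, hctsw]
    simp only [Multiset.card_add, Multiset.coe_card, List.length_cons, List.length_nil]
    omega
  · -- a is moved by σ
    set c := σ.cycleOf a with hc_def
    have hc : c.IsCycle := Equiv.Perm.isCycle_cycleOf σ ha
    have hmem : c ∈ σ.cycleFactorsFinset :=
      Equiv.Perm.cycleOf_mem_cycleFactorsFinset_iff.mpr (Equiv.Perm.mem_support.mpr ha)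
    have hdisj : Equiv.Perm.Disjoint (σ * c⁻¹) c :=
      Equiv.Perm.disjoint_mul_inv_of_mem_cycleFactorsFinset hmem
    set ρ := σ * c⁻¹ with hρ_def
    have hσρ : σ = ρ * c := by rw [hρ_def]; group
    have hbs : b ∉ σ.support := by simp [Equiv.Perm.mem_support, hb]
    have hbc : b ∉ c.support := fun h => hbs (Equiv.Perm.support_cycleOf_le σ a h)
    have hcb : c b = b := by
      by_contra h; exact hbc (Equiv.Perm.mem_support.mpr h)
    have hac : a ∈ c.support := by
      rw [Equiv.Perm.mem_support_cycleOf_iff]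
      exact ⟨Equiv.Perm.SameCycle.refl _ _, Equiv.Perm.mem_support.mpr ha⟩
    have hca : c a ≠ a := Equiv.Perm.mem_support.mp hac
    set c' := c * Equiv.swap a b with hc'_def
    have hkey : ∀ x : Fin n, x ∉ c.support → x ≠ b → c' x = x := by
      intro x hx hxb
      have hxa : x ≠ a := fun h => hx (h ▸ hac)
      have hcx : c x = x := by
        by_contra h; exact hx (Equiv.Perm.mem_support.mpr h)
      simp [hc'_def, Equiv.Perm.mul_apply, Equiv.swap_apply_of_ne_of_ne hxa hxb, hcx]
    have h1 : c' b = c a := by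
      simp [hc'_def, Equiv.Perm.mul_apply, Equiv.swap_apply_right]
    have h2 : c' a = b := by
      simp [hc'_def, Equiv.Perm.mul_apply, Equiv.swap_apply_left, hcb]
    have hstep : ∀ x, x ∈ c.support → x ≠ a → c' x = c x := by
      intro x hx hxa
      have hxb : x ≠ b := fun h => hbc (h ▸ hx)
      simp [hc'_def, Equiv.Perm.mul_apply, Equiv.swap_apply_of_ne_of_ne hxa hxb]
    have hcab : c a ≠ b := fun h => hbc (h ▸ Equiv.Perm.apply_mem_support.mpr hac)
    have hpow : ∀ k : ℕ, c'.SameCycle b ((c ^ k) a) := by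
      intro k
      induction k with
      | zero =>
        refine ⟨-1, ?_⟩
        simp only [zpow_neg, zpow_one, pow_zero, Equiv.Perm.one_apply]
        rw [← h2]; simp
      | succ k ih =>
        by_cases h : (c ^ k) a = a
        · refine ⟨1, ?_⟩
          simp only [zpow_one]
          rw [h1, pow_succ', Equiv.Perm.mul_apply, h]
        · have hxs : (c ^ k) a ∈ c.support := Equiv.Perm.pow_apply_mem_support.mpr hac
          have hcc := hstep _ hxs h
          have hxb : (c ^ k) a ≠ b := fun hh => hbc (hh ▸ hxs)
          refine ih.trans ⟨1, ?_⟩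
          simp only [zpow_one]
          rw [hcc, pow_succ', Equiv.Perm.mul_apply]
    have hc'b : c' b ≠ b := by rw [h1]; exact hcab
    have hc' : c'.IsCycle := by
      refine ⟨b, hc'b, fun y hy => ?_⟩
      rcases eq_or_ne y b with rfl | hyb
      · exact Equiv.Perm.SameCycle.refl _ _
      have hys : y ∈ c.support := by
        by_contra hys
        exact hy (hkey y hys hyb)
      have hcy : c y ≠ y := Equiv.Perm.mem_support.mp hys
      obtain ⟨i, _, _, hi⟩ := Equiv.Perm.SameCycle.exists_pow_eq c (hc.sameCycle hca hcy)
      rw [← hi]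
      exact hpow i
    have hinvb : c⁻¹ b = b := by
      rw [Equiv.Perm.inv_eq_iff_eq]; exact hcb.symm
    have hdisj' : Equiv.Perm.Disjoint ρ c' := by
      intro x
      by_cases hx : x ∈ c.support
      · rcases hdisj x with h | h
        · exact Or.inl h
        · exact absurd h (Equiv.Perm.mem_support.mp hx)
      rcases eq_or_ne x b with rfl | hxb
      · refine Or.inl ?_
        show (σ * c⁻¹) x = x
        rw [Equiv.Perm.mul_apply, hinvb, hb]
      · exact Or.inr (hkey x hx hxb)
    have hτ : σ * Equiv.swap a b = ρ * c' := by rw [hσρ, hc'_def, mul_assoc]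
    have hct1 : σ.cycleType = ρ.cycleType + c.cycleType := by
      rw [hσρ]; exact hdisj.cycleType_mul
    have hct2 : (σ * Equiv.swap a b).cycleType = ρ.cycleType + c'.cycleType := by
      rw [hτ]; exact hdisj'.cycleType_mul
    have hbS : b ∈ Finset.univ.filter (fun x => σ x = x) := by simp [hb]
    have hfixset : Finset.univ.filter (fun x => (σ * Equiv.swap a b) x = x)
        = (Finset.univ.filter (fun x => σ x = x)).erase b := by
      ext x
      simp only [Finset.mem_filter, Finset.mem_univ, true_and, Finset.mem_erase, hfix x]
      constructor
      · rintro ⟨hx1, _, hx3⟩; exact ⟨hx3, hx1⟩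
      · rintro ⟨hx3, hx1⟩; exact ⟨hx1, fun hxa => ha (hxa ▸ hx1), hx3⟩
    have hcard := Finset.card_erase_of_mem hbS
    have hb1 : 1 ≤ (Finset.univ.filter (fun x => σ x = x)).card :=
      Finset.card_pos.mpr ⟨b, hbS⟩
    unfold cycleCount
    rw [hfixset, hct1, hct2, hc.cycleType, hc'.cycleType]
    simp only [Multiset.card_add, Multiset.coe_card, List.length_cons, List.length_nil,
      Multiset.card_singleton]
    omega

/-- `(z + J_1)(z + J_2)⋯(z + J_n) = Σ_{σ ∈ S(n)} z^{#(σ)} σ` in ℚ[S(n)]. -/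
theorem prod_z_add_JM (n : ℕ) (hn : 1 ≤ n) (z : ℚ) :
    ((List.finRange n).map (fun i => algebraMap ℚ (GA n) z + JM n i)).prod =
      ∑ σ : Equiv.Perm (Fin n), MonoidAlgebra.single σ (z ^ cycleCount σ) := by
  have key : ∀ k : ℕ, k ≤ n →
      (((List.finRange n).map (fun i => algebraMap ℚ (GA n) z + JM n i)).take k).prod =
      ∑ σ ∈ Finset.univ.filter
          (fun σ : Equiv.Perm (Fin n) => ∀ j : Fin n, k ≤ (j : ℕ) → σ j = j),
        MonoidAlgebra.single σ (z ^ (cycleCount σ - (n - k))) := by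
    intro k
    induction k with
    | zero =>
      intro _
      have hE : Finset.univ.filter
          (fun σ : Equiv.Perm (Fin n) => ∀ j : Fin n, 0 ≤ (j : ℕ) → σ j = j) = {1} := by
        ext σ
        simp only [mem_filter, mem_univ, true_and, Finset.mem_singleton]
        constructor
        · intro h; exact Equiv.ext fun j => h j (Nat.zero_le _)
        · rintro rfl j _; rfl
      have hcc1 : cycleCount (1 : Equiv.Perm (Fin n)) = n := by
        unfold cycleCount
        simp [Equiv.Perm.cycleType_one]
      rw [hE]
      simp [hcc1, MonoidAlgebra.one_def]
    | succ k ih =>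
      intro hkn
      have hk : k < n := hkn
      set kf : Fin n := ⟨k, hk⟩ with hkf
      have IH := ih (Nat.le_of_succ_le hkn)
      have hlen : k < ((List.finRange n).map
          (fun i => algebraMap ℚ (GA n) z + JM n i)).length := by simp [hk]
      rw [List.prod_take_succ _ k hlen, IH]
      have hget : ((List.finRange n).map (fun i => algebraMap ℚ (GA n) z + JM n i))[k]
          = algebraMap ℚ (GA n) z + JM n kf := by
        simp [hkf]
      rw [hget]
      -- abbreviations
      have hmemE : ∀ σ : Equiv.Perm (Fin n),
          σ ∈ Finset.univ.filter
            (fun σ : Equiv.Perm (Fin n) => ∀ j : Fin n, k ≤ (j : ℕ) → σ j = j)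
          ↔ ∀ j : Fin n, k ≤ (j : ℕ) → σ j = j := by
        intro σ; simp
      have hccE : ∀ σ : Equiv.Perm (Fin n), (∀ j : Fin n, k ≤ (j : ℕ) → σ j = j) →
          n - k ≤ cycleCount σ := by
        intro σ hσ
        have hsub : Finset.Ici kf ⊆ Finset.univ.filter (fun x => σ x = x) := by
          intro j hj
          rw [Finset.mem_Ici] at hj
          simp only [mem_filter, mem_univ, true_and]
          exact hσ j hj
        have h1 : n - k ≤ (Finset.univ.filter (fun x => σ x = x)).card := by
          have := Finset.card_le_card hsub
          rwa [Fin.card_Ici] at this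
        exact le_trans h1 (Nat.le_add_left _ _)
      have hsplit := Finset.sum_filter_add_sum_filter_not
        (Finset.univ.filter
          (fun σ : Equiv.Perm (Fin n) => ∀ j : Fin n, k + 1 ≤ (j : ℕ) → σ j = j))
        (fun τ => τ kf = kf)
        (fun τ => MonoidAlgebra.single τ (z ^ (cycleCount τ - (n - (k + 1)))))
      have hEE : (Finset.univ.filter
          (fun σ : Equiv.Perm (Fin n) => ∀ j : Fin n, k + 1 ≤ (j : ℕ) → σ j = j)).filter
            (fun τ => τ kf = kf)
          = Finset.univ.filter
            (fun σ : Equiv.Perm (Fin n) => ∀ j : Fin n, k ≤ (j : ℕ) → σ j = j) := by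
        ext τ
        simp only [Finset.mem_filter, Finset.mem_univ, true_and]
        constructor
        · rintro ⟨h1, h2⟩ j hj
          rcases eq_or_lt_of_le hj with heq | hlt
          · have : j = kf := Fin.ext heq.symm
            rw [this]; exact h2
          · exact h1 j hlt
        · intro h
          exact ⟨fun j hj => h j (Nat.le_of_succ_le hj), h kf (le_refl k)⟩
      rw [← hsplit, hEE, mul_add]
      congr 1
      · -- z part
        rw [Finset.sum_mul]
        refine Finset.sum_congr rfl fun σ hσ => ?_
        have hσE := (hmemE σ).mp hσ
        have halg : (algebraMap ℚ (GA n)) z = MonoidAlgebra.single 1 z := by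
          rw [MonoidAlgebra.coe_algebraMap]; rfl
        rw [halg, MonoidAlgebra.single_mul_single, mul_one]
        congr 1
        have hge := hccE σ hσE
        rw [← pow_succ]
        congr 1
        omega
      · -- swap part
        simp only [JM]
        rw [Finset.sum_mul_sum]
        simp only [MonoidAlgebra.single_mul_single, mul_one]
        rw [← Finset.sum_product']
        refine Finset.sum_nbij'
          (i := fun p : Equiv.Perm (Fin n) × Fin n => p.1 * Equiv.swap p.2 kf)
          (j := fun τ => (τ * Equiv.swap (τ⁻¹ kf) kf, τ⁻¹ kf)) ?_ ?_ ?_ ?_ ?_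
        · -- i maps into target
          rintro ⟨σ, s⟩ hp
          rw [Finset.mem_product] at hp
          obtain ⟨hσ, hs⟩ := hp
          have hσE := (hmemE σ).mp hσ
          have hsk : s < kf := (Finset.mem_filter.mp hs).2
          have hskv : (s : ℕ) < k := hsk
          have hσkf : σ kf = kf := hσE kf (le_refl k)
          simp only [Finset.mem_filter, Finset.mem_univ, true_and]
          constructor
          · intro j hj
            have hjs : j ≠ s := by
              intro h; rw [h] at hj; omega
            have hjk : j ≠ kf := by
              intro h; rw [h] at hj; simp [hkf] at hj
            simp only [Equiv.Perm.mul_apply, Equiv.swap_apply_of_ne_of_ne hjs hjk]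
            exact hσE j (by omega)
          · -- (σ * swap s kf) kf ≠ kf
            simp only [Equiv.Perm.mul_apply, Equiv.swap_apply_right]
            intro h
            have : s = kf := σ.injective (h.trans hσkf.symm)
            rw [this] at hskv; simp [hkf] at hskv
        · -- j maps into source
          intro τ hτ
          rw [Finset.mem_filter] at hτ
          obtain ⟨hτ', hτkf⟩ := hτ
          rw [Finset.mem_filter] at hτ'
          have hτE : ∀ j : Fin n, k + 1 ≤ (j : ℕ) → τ j = j := hτ'.2
          set s := τ⁻¹ kf with hs_def
          have hskf : s ≠ kf := by
            intro h
            apply hτkf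
            rw [hs_def] at h
            have := congrArg τ h
            rw [Equiv.Perm.inv_def, Equiv.apply_symm_apply] at this
            exact this.symm
          have hsv : (s : ℕ) < k := by
            by_contra hle
            push_neg at hle
            rcases eq_or_lt_of_le hle with heq | hlt
            · exact hskf (Fin.ext heq.symm)
            · have hfix : τ s = s := hτE s hlt
              apply hskf
              have : τ s = kf := by rw [hs_def, Equiv.Perm.inv_def, Equiv.apply_symm_apply]
              rw [hfix] at this
              exact this
          rw [Finset.mem_product]
          constructor
          · rw [hmemE]
            intro j hj
            rcases eq_or_lt_of_le hj with heq | hlt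
            · have hjkf : j = kf := Fin.ext heq.symm
              rw [hjkf]
              simp only [Equiv.Perm.mul_apply, Equiv.swap_apply_right, hs_def,
                Equiv.Perm.inv_def, Equiv.apply_symm_apply]
            · have hjs : j ≠ s := by
                intro h; rw [h] at hlt; omega
              have hjk : j ≠ kf := by
                intro h; rw [h] at hlt; simp [hkf] at hlt
              simp only [Equiv.Perm.mul_apply, Equiv.swap_apply_of_ne_of_ne hjs hjk]
              exact hτE j hlt
          · simp only [Finset.mem_filter, Finset.mem_univ, true_and]
            exact Fin.lt_def.mpr (by simpa [hkf] using hsv)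
        · -- left inverse
          rintro ⟨σ, s⟩ hp
          rw [Finset.mem_product] at hp
          obtain ⟨hσ, hs⟩ := hp
          have hσE := (hmemE σ).mp hσ
          have hsk : s < kf := (Finset.mem_filter.mp hs).2
          have hσkf : σ kf = kf := hσE kf (le_refl k)
          have happ : (σ * Equiv.swap s kf) s = kf := by
            simp only [Equiv.Perm.mul_apply, Equiv.swap_apply_left, hσkf]
          have hinv : (σ * Equiv.swap s kf)⁻¹ kf = s := by
            rw [Equiv.Perm.inv_eq_iff_eq]
            exact happ.symm
          dsimp only
          rw [Prod.mk.injEq]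
          refine ⟨?_, hinv⟩
          rw [hinv, mul_assoc, Equiv.swap_mul_self, mul_one]
        · -- right inverse
          intro τ hτ
          dsimp only
          rw [mul_assoc, Equiv.swap_mul_self, mul_one]
        · -- values agree
          rintro ⟨σ, s⟩ hp
          rw [Finset.mem_product] at hp
          obtain ⟨hσ, hs⟩ := hp
          have hσE := (hmemE σ).mp hσ
          have hsk : s < kf := (Finset.mem_filter.mp hs).2
          have hσkf : σ kf = kf := hσE kf (le_refl k)
          have hskne : s ≠ kf := ne_of_lt hsk
          have hcc := cycleCount_mul_swap_s2 σ s kf hσkf hskne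
          have hge := hccE σ hσE
          dsimp only
          congr 1
          congr 1
          omega
  have h := key n le_rfl
  rw [List.take_of_length_le (by simp)] at h
  rw [h]
  rw [Finset.filter_true_of_mem (fun σ _ => fun j hj => absurd j.isLt (Nat.not_lt.mpr hj))]
  simp
end
end

section
/- Let f ∈ ℚ[x_1,…,x_n] be a homogeneous symmetric polynomial of degree k, let π ∈ S(n) have reduced cycle type μ, andform f(J_1,…,J_n) ∈ ℚ[S(n)]. If the coefficient of π in f(J_1,…,J_n) is nonzero, then |μ| ≤ k and |μ| ≡ k (mod 2). -/
noncomputable section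
open scoped Classical

section Aux
open Equiv Equiv.Perm Module LinearMap

variable {n : ℕ}




def Tm (σ : Perm (Fin n)) : (Fin n → ℚ) →ₗ[ℚ] (Fin n → ℚ) := LinearMap.funLeft ℚ ℚ σ
def Dm (σ : Perm (Fin n)) : (Fin n → ℚ) →ₗ[ℚ] (Fin n → ℚ) := Tm σ - LinearMap.id
def rk (σ : Perm (Fin n)) : ℕ := finrank ℚ (LinearMap.range (Dm σ))

lemma Dm_apply (σ : Perm (Fin n)) (f : Fin n → ℚ) (x : Fin n) :
    Dm σ f x = f (σ x) - f x := rfl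

lemma rk_one : rk (1 : Perm (Fin n)) = 0 := by
  have : Dm (1 : Perm (Fin n)) = 0 := by
    ext f x; simp [Dm_apply]
  simp [rk, this]

lemma rk_swap_le {σ : Perm (Fin n)} (h : σ.IsSwap) : rk σ ≤ 1 := by
  obtain ⟨a, b, hab, rfl⟩ := h
  set v : Fin n → ℚ := Pi.single a (1:ℚ) - Pi.single b 1 with hv
  have hrange : LinearMap.range (Dm (swap a b)) ≤ Submodule.span ℚ {v} := by
    rintro - ⟨f, rfl⟩
    have : Dm (swap a b) f = (f b - f a) • v := by
      funext x
      rcases eq_or_ne x a with rfl | hxa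
      · simp [Dm_apply, hv, swap_apply_left, Pi.single_apply, hab, Ne.symm hab]
      rcases eq_or_ne x b with rfl | hxb
      · simp only [Dm_apply, hv, swap_apply_right, Pi.single_apply, Pi.sub_apply, Pi.smul_apply,
          if_neg (Ne.symm hab), if_pos rfl, smul_eq_mul, if_true, mul_one]
        ring
      · simp [Dm_apply, hv, swap_apply_of_ne_of_ne hxa hxb, Pi.single_apply, hxa, hxb]
    rw [this]
    exact Submodule.smul_mem _ _ (Submodule.mem_span_singleton_self v)
  calc rk (swap a b) ≤ finrank ℚ (Submodule.span ℚ {v}) := Submodule.finrank_mono hrange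
    _ ≤ 1 := by simpa using finrank_span_le_card (R := ℚ) ({v} : Set _)

lemma Tm_mul (σ τ : Perm (Fin n)) : Tm (σ * τ) = (Tm τ).comp (Tm σ) := by
  ext f x; rfl

lemma rk_mul_le (σ τ : Perm (Fin n)) : rk (σ * τ) ≤ rk σ + rk τ := by
  have hD : Dm (σ * τ) = (Tm τ).comp (Dm σ) + Dm τ := by
    ext f x
    simp [Dm, Tm_mul, LinearMap.sub_apply, LinearMap.add_apply, LinearMap.comp_apply]
  have hrange : LinearMap.range (Dm (σ * τ)) ≤
      LinearMap.range ((Tm τ).comp (Dm σ)) ⊔ LinearMap.range (Dm τ) := by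
    rintro - ⟨f, rfl⟩
    rw [hD]
    exact Submodule.add_mem_sup (LinearMap.mem_range_self _ f) (LinearMap.mem_range_self _ f)
  calc rk (σ * τ) ≤ finrank ℚ ↥(LinearMap.range ((Tm τ).comp (Dm σ)) ⊔ LinearMap.range (Dm τ)) :=
        Submodule.finrank_mono hrange
    _ ≤ finrank ℚ (LinearMap.range ((Tm τ).comp (Dm σ))) + finrank ℚ (LinearMap.range (Dm τ)) :=
        Submodule.finrank_add_le_finrank_add_finrank _ _
    _ ≤ rk σ + rk τ := by
        refine Nat.add_le_add_right ?_ _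
        rw [LinearMap.range_comp]
        exact Submodule.finrank_map_le _ _

lemma rk_prod_le (l : List (Perm (Fin n))) (hl : ∀ τ ∈ l, τ.IsSwap) :
    rk l.prod ≤ l.length := by
  induction l with
  | nil => simp [rk_one]
  | cons a l ih =>
      simp only [List.prod_cons, List.length_cons]
      calc rk (a * l.prod) ≤ rk a + rk l.prod := rk_mul_le _ _
        _ ≤ 1 + l.length := add_le_add (rk_swap_le (hl a (by simp)))
            (ih fun τ hτ => hl τ (by simp [hτ]))
        _ = l.length + 1 := by omega

lemma fixed_zpow {σ : Perm (Fin n)} {f : Fin n → ℚ} (hf : ∀ x, f (σ x) = f x) (i : ℤ) :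
    ∀ x, f ((σ ^ i) x) = f x := by
  induction i using Int.induction_on with
  | zero => simp
  | succ i ih =>
      intro x
      rw [zpow_add_one, Equiv.Perm.mul_apply, ih (σ x), hf]
  | pred i ih =>
      intro x
      rw [zpow_sub_one, Equiv.Perm.mul_apply, ih (σ⁻¹ x)]
      have := hf (σ⁻¹ x)
      rw [show σ (σ⁻¹ x) = x from σ.apply_symm_apply x] at this
      exact this.symm

lemma msum (m : Multiset ℕ) (h : ∀ x ∈ m, 1 ≤ x) :
    (m.map (· - 1)).sum + Multiset.card m = m.sum := by
  induction m using Multiset.induction_on with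
  | empty => simp
  | cons a m ih =>
      simp only [Multiset.map_cons, Multiset.sum_cons, Multiset.card_cons]
      have h1 : 1 ≤ a := h a (Multiset.mem_cons_self a m)
      have h2 := ih fun x hx => h x (Multiset.mem_cons_of_mem hx)
      omega

lemma rct_le_rk (σ : Perm (Fin n)) : (σ.cycleType.map (· - 1)).sum ≤ rk σ := by
  classical
  have hne : ∀ g ∈ σ.cycleFactorsFinset, g.support.Nonempty := by
    intro g hg
    exact (Equiv.Perm.mem_cycleFactorsFinset_iff.mp hg).1.nonempty_support
  set R : Finset (Fin n) :=
    (Finset.univ \ σ.support) ∪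
      σ.cycleFactorsFinset.attach.image (fun g => g.1.support.min' (hne g.1 g.2)) with hR
  -- every point is reachable from R
  have reach : ∀ x : Fin n, ∃ r ∈ R, ∃ i : ℤ, (σ ^ i) r = x := by
    intro x
    by_cases hx : x ∈ σ.support
    · have hg : σ.cycleOf x ∈ σ.cycleFactorsFinset :=
        Equiv.Perm.cycleOf_mem_cycleFactorsFinset_iff.mpr hx
      refine ⟨(σ.cycleOf x).support.min' (hne _ hg), ?_, ?_⟩
      · exact Finset.mem_union_right _
          (Finset.mem_image.mpr ⟨⟨_, hg⟩, Finset.mem_attach _ _, rfl⟩)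
      · have hrmem := Finset.min'_mem (σ.cycleOf x).support (hne _ hg)
        have hsc : σ.SameCycle x _ := (Equiv.Perm.mem_support_cycleOf_iff.mp hrmem).1
        exact hsc.symm
    · exact ⟨x, Finset.mem_union_left _ (by simp [Finset.mem_sdiff, hx]), 0, by simp⟩
  -- kernel bound
  have hker : finrank ℚ ↥(LinearMap.ker (Dm σ)) ≤ R.card := by
    set φ : ↥(LinearMap.ker (Dm σ)) →ₗ[ℚ] ({x // x ∈ R} → ℚ) :=
      (LinearMap.funLeft ℚ ℚ (fun r : {x // x ∈ R} => (r : Fin n))).comp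
        (LinearMap.ker (Dm σ)).subtype with hφ
    have hinj : Function.Injective φ := by
      rw [← LinearMap.ker_eq_bot, LinearMap.ker_eq_bot']
      intro f h0
      have hfix : ∀ x, (f : Fin n → ℚ) (σ x) = (f : Fin n → ℚ) x := by
        intro x
        have := f.2
        rw [LinearMap.mem_ker] at this
        have h' := congrFun this x
        rw [Dm_apply, Pi.zero_apply, sub_eq_zero] at h'
        exact h'
      have hz : ∀ r ∈ R, (f : Fin n → ℚ) r = 0 := by
        intro r hr
        exact congrFun h0 ⟨r, hr⟩
      apply Subtype.ext
      funext x
      obtain ⟨r, hr, i, hi⟩ := reach x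
      have := fixed_zpow hfix i r
      rw [hi] at this
      simpa [this] using hz r hr
    calc finrank ℚ ↥(LinearMap.ker (Dm σ)) ≤ finrank ℚ ({x // x ∈ R} → ℚ) :=
          LinearMap.finrank_le_finrank_of_injective hinj
      _ = R.card := by rw [Module.finrank_fintype_fun_eq_card, Fintype.card_coe]
  -- cardinality of R
  have hRcard : R.card ≤ (n - σ.support.card) + Multiset.card σ.cycleType := by
    calc R.card ≤ (Finset.univ \ σ.support).card +
          (σ.cycleFactorsFinset.attach.image (fun g => g.1.support.min' (hne g.1 g.2))).card :=
          Finset.card_union_le _ _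
      _ ≤ (n - σ.support.card) + Multiset.card σ.cycleType := by
          refine add_le_add ?_ ?_
          · rw [Finset.card_sdiff_of_subset (Finset.subset_univ _)]
            simp
          · calc _ ≤ σ.cycleFactorsFinset.attach.card := Finset.card_image_le
              _ = Multiset.card σ.cycleType := by
                  rw [Finset.card_attach]
                  simp [Equiv.Perm.cycleType]
  have hrn := LinearMap.finrank_range_add_finrank_ker (Dm σ)
  have hdim : finrank ℚ (Fin n → ℚ) = n := by
    rw [Module.finrank_fintype_fun_eq_card, Fintype.card_fin]
  rw [hdim] at hrn
  have hs : σ.support.card ≤ n := by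
    simpa using Finset.card_le_univ σ.support
  have hct := msum σ.cycleType (fun x hx => le_trans (by norm_num)
    (Equiv.Perm.two_le_of_mem_cycleType hx))
  have hsum := Equiv.Perm.sum_cycleType σ
  unfold rk at *
  omega
section PartA




def Pp {n : ℕ} (L : ℕ) (g : GA n) : Prop :=
  ∀ π ∈ g.coeff.support, ∃ sl : List (Equiv.Perm (Fin n)),
    (∀ τ ∈ sl, τ.IsSwap) ∧ sl.length = L ∧ sl.prod = π

lemma Pp_one {n : ℕ} : Pp (n := n) 0 1 := by
  intro π hπ
  have : π = 1 := by
    have := Finsupp.support_single_subset (a := (1 : Equiv.Perm (Fin n))) (b := (1:ℚ)) hπ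
    simpa using this
  exact ⟨[], by simp, rfl, by simp [this]⟩

lemma Pp_mul {n : ℕ} {a b : ℕ} {g h : GA n} (hg : Pp a g) (hh : Pp b h) :
    Pp (a + b) (g * h) := by
  intro π hπ
  have := MonoidAlgebra.support_coeff_mul_subset g h hπ
  rw [Finset.mem_mul] at this
  obtain ⟨x, hx, y, hy, hxy⟩ := this
  obtain ⟨l1, h1, hl1, hp1⟩ := hg x hx
  obtain ⟨l2, h2, hl2, hp2⟩ := hh y hy
  exact ⟨l1 ++ l2, by intro τ hτ; rcases List.mem_append.mp hτ with h | h; exacts [h1 τ h, h2 τ h],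
    by simp [hl1, hl2], by simp [hp1, hp2, hxy]⟩

lemma Pp_JM {n : ℕ} (i : Fin n) : Pp 1 (JM n i) := by
  intro π hπ
  have hsub : (JM n i).coeff.support ⊆ (Finset.univ.filter (fun s => s < i)).biUnion
      (fun s => (MonoidAlgebra.single (M := Equiv.Perm (Fin n)) (Equiv.swap s i) (1 : ℚ)).coeff.support) := by
    rw [JM, MonoidAlgebra.coeff_sum]; exact Finsupp.support_finsetSum
  have := Finset.mem_biUnion.mp (hsub hπ)
  obtain ⟨s, hs, hmem⟩ := this
  have hsi : s < i := (Finset.mem_filter.mp hs).2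
  have : π = Equiv.swap s i := by
    have := Finsupp.support_single_subset hmem
    simpa using this
  exact ⟨[Equiv.swap s i], by simpa using ⟨s, i, ne_of_lt hsi, rfl⟩, rfl, by simp [this]⟩

lemma Pp_pow {n : ℕ} (i : Fin n) (m : ℕ) : Pp m (JM n i ^ m) := by
  induction m with
  | zero => simpa using Pp_one
  | succ m ih => rw [pow_succ]; exact (Pp_mul ih (Pp_JM i))

lemma Pp_list {n : ℕ} (m : Fin n →₀ ℕ) : ∀ L : List (Fin n),
    Pp ((L.map m).sum) ((L.map fun i => JM n i ^ m i).prod) := by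
  intro L
  induction L with
  | nil => simpa using Pp_one
  | cons i L ih => simpa using Pp_mul (Pp_pow i (m i)) ih
end PartA

lemma units_parity {a b : ℕ} (h : (-1 : ℤˣ) ^ a = (-1 : ℤˣ) ^ b) : a % 2 = b % 2 := by
  rcases Nat.even_or_odd a with ha | ha <;> rcases Nat.even_or_odd b with hb | hb
  · rw [Nat.even_iff] at ha hb; omega
  · rw [ha.neg_one_pow, hb.neg_one_pow] at h
    exact absurd h (by decide)
  · rw [ha.neg_one_pow, hb.neg_one_pow] at h
    exact absurd h (by decide)
  · rw [Nat.odd_iff] at ha hb; omega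

lemma crux {l : List (Perm (Fin n))} (hl : ∀ τ ∈ l, τ.IsSwap) :
    (reducedCycleType l.prod).sum ≤ l.length ∧
      (reducedCycleType l.prod).sum % 2 = l.length % 2 := by
  constructor
  · exact le_trans (rct_le_rk l.prod) (rk_prod_le l hl)
  · have hs := sign_prod_list_swap hl
    rw [sign_of_cycleType] at hs
    have hp := units_parity hs
    have hct := msum (l.prod).cycleType (fun x hx => le_trans (by norm_num)
      (two_le_of_mem_cycleType hx))
    unfold reducedCycleType
    omega

end Aux

/-- Vanishing criterion: if `f` is a homogeneous symmetric polynomial of degree `k` and the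
coefficient of a permutation `π` of reduced cycle type `μ` in `f(J_1,…,J_n)` is nonzero,
then `|μ| ≤ k` and `|μ| ≡ k (mod 2)`. -/
theorem vanishing_criterion (n k : ℕ) (f : MvPolynomial (Fin n) ℚ)
    (hhom : f.IsHomogeneous k) (hsym : f.IsSymmetric)
    (π : Equiv.Perm (Fin n)) (hne : (evalJM f).coeff π ≠ 0) :
    (reducedCycleType π).sum ≤ k ∧ (reducedCycleType π).sum % 2 = k % 2 := by
  classical
  have hπ : π ∈ (evalJM f).coeff.support := Finsupp.mem_support_iff.mpr hne
  have hsub : (evalJM f).coeff.support ⊆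
      f.support.biUnion fun m =>
        ((fun m (c : ℚ) => c • ((List.finRange n).map (fun i => JM n i ^ m i)).prod) m
          (MvPolynomial.coeff m f)).coeff.support := by
    rw [evalJM, MonoidAlgebra.coeff_finsuppSum]; exact Finsupp.support_sum
  obtain ⟨m, hm, hmem⟩ := Finset.mem_biUnion.mp (hsub hπ)
  have hmem' : π ∈ (((List.finRange n).map (fun i => JM n i ^ m i)).prod).coeff.support :=
    Finsupp.support_smul hmem
  obtain ⟨sl, hswaps, hlen, hprod⟩ := Pp_list m (List.finRange n) π hmem'
  have hdeg : ((List.finRange n).map m).sum = k := by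
    have h1 : ∑ i, m i = ((List.finRange n).map m).sum := Fin.sum_univ_def m
    have h2 : (Finsupp.weight fun _ => 1) m = k := hhom (MvPolynomial.mem_support_iff.mp hm)
    rw [← Finsupp.degree_eq_weight_one] at h2
    rw [← h1, ← h2, Finsupp.degree]
    exact (Finset.sum_subset (Finset.subset_univ _)
      (fun x _ hx => Finsupp.notMem_support_iff.mp hx)).symm
  have := crux hswaps
  rw [hprod, hlen, hdeg] at this
  exact this
end
end

section
/- For all integers a ≥ 0 and r ≥ 1, the cardinality of 𝔈(a;r) equals the Catalan number Cat_r = (1/(r+1))·binom(2r, r). In particular, Σ_{λ ⊢ k} RC(λ) = Cat_k for every k ≥ 1. -/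
noncomputable section
open scoped Classical

/-- Membership in `𝔈(a;r)`: a weakly increasing sequence `(i_1 ≤ ⋯ ≤ i_r)` (zero-based here)
with `i_p ≥ a + p` for `1 ≤ p ≤ r − 1` and `i_r = a + r`. -/
def Epred (a r : ℕ) (t : Fin r → ℕ) : Prop :=
  Monotone t ∧ (∀ p : Fin r, (p : ℕ) + 1 ≤ r - 1 → a + (p : ℕ) + 1 ≤ t p) ∧
    (∀ p : Fin r, (p : ℕ) + 1 = r → t p = a + r)

/-- The type of a weakly increasing sequence: the multiset of multiplicities of its
distinct values. -/
def seqTypeNat {k : ℕ} (t : Fin k → ℕ) : Multiset ℕ :=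
  (Finset.univ.image t).val.map (fun v => (Finset.univ.filter (fun i => t i = v)).card)

/-- The refined Catalan number `RC(λ)`: the number of sequences in `𝔈(|λ|) = 𝔈(0;|λ|)`
of type `λ`. -/
def RC (lam : Multiset ℕ) : ℕ :=
  Nat.card {t : Fin lam.sum → ℕ // Epred 0 lam.sum t ∧ seqTypeNat t = lam}

/-! ### Auxiliary development -/

/-- Normalized form of `Epred`: subtract off `a`. -/
def Eset (r : ℕ) (u : Fin r → ℕ) : Prop :=
  Monotone u ∧ (∀ p : Fin r, (p : ℕ) + 1 ≤ u p) ∧ (∀ p : Fin r, (p : ℕ) + 1 = r → u p = r)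

/-- The type of normalized sequences. -/
def ETy (r : ℕ) : Type := {u : Fin r → ℕ // Eset r u}

lemma Eset.le_r {r : ℕ} {u : Fin r → ℕ} (h : Eset r u) (p : Fin r) : u p ≤ r := by
  have hp := p.isLt
  have hq : r - 1 < r := by omega
  have h1 : u p ≤ u ⟨r - 1, hq⟩ :=
    h.1 (show p ≤ ⟨r - 1, hq⟩ from by rw [Fin.le_def]; show (p : ℕ) ≤ r - 1; omega)
  have h2 : u ⟨r - 1, hq⟩ = r := h.2.2 _ (show r - 1 + 1 = r by omega)
  omega

instance ETy.finite (r : ℕ) : Finite (ETy r) := by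
  apply Finite.of_injective
    (fun u : ETy r => fun p : Fin r => (⟨u.1 p, Nat.lt_succ_of_le (u.2.le_r p)⟩ : Fin (r + 1)))
  intro u v h
  exact Subtype.ext (funext fun p => congrArg Fin.val (congrFun h p))

noncomputable instance ETy.fintype (r : ℕ) : Fintype (ETy r) := Fintype.ofFinite _

/-- Epred and Eset are equivalent up to shifting by `a`. -/
def shiftEquiv (a r : ℕ) : {t : Fin r → ℕ // Epred a r t} ≃ ETy r where
  toFun t := by
    refine ⟨fun p => t.1 p - a, ?_, ?_, ?_⟩
    · intro p q hpq
      exact Nat.sub_le_sub_right (t.2.1 hpq) a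
    · intro p
      have hp := p.isLt
      show (p : ℕ) + 1 ≤ t.1 p - a
      rcases Nat.lt_or_ge ((p : ℕ) + 1) r with h | h
      · have := t.2.2.1 p (by omega)
        omega
      · have := t.2.2.2 p (by omega)
        omega
    · intro p hp
      show t.1 p - a = r
      have := t.2.2.2 p hp
      omega
  invFun u := by
    refine ⟨fun p => u.1 p + a, ?_, ?_, ?_⟩
    · intro p q hpq
      exact Nat.add_le_add_right (u.2.1 hpq) a
    · intro p _
      show a + (p : ℕ) + 1 ≤ u.1 p + a
      have := u.2.2.1 p
      omega
    · intro p hp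
      show u.1 p + a = a + r
      have := u.2.2.2 p hp
      omega
  left_inv t := by
    apply Subtype.ext
    funext p
    have hp := p.isLt
    have hge : a + (p : ℕ) + 1 ≤ t.1 p := by
      rcases Nat.lt_or_ge ((p : ℕ) + 1) r with h | h
      · exact t.2.2.1 p (by omega)
      · have := t.2.2.2 p (by omega)
        omega
    show t.1 p - a + a = t.1 p
    omega
  right_inv u := by
    apply Subtype.ext
    funext p
    show u.1 p + a - a = u.1 p
    omega

/-- `F r` is the number of normalized sequences. -/
def F (r : ℕ) : ℕ := Nat.card (ETy r)

lemma card_Epred (a r : ℕ) : Nat.card {t : Fin r → ℕ // Epred a r t} = F r :=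
  Nat.card_congr (shiftEquiv a r)

instance Epred.finite (a r : ℕ) : Finite {t : Fin r → ℕ // Epred a r t} :=
  Finite.of_equiv _ (shiftEquiv a r).symm

noncomputable instance Epred.fintype (a r : ℕ) : Fintype {t : Fin r → ℕ // Epred a r t} :=
  Fintype.ofFinite _

lemma F_zero : F 0 = 1 := by
  have : Unique (ETy 0) := by
    refine ⟨⟨⟨fun p => p.elim0, ?_, ?_, ?_⟩⟩, ?_⟩
    · intro p; exact p.elim0
    · intro p; exact p.elim0
    · intro p; exact p.elim0
    · intro u
      exact Subtype.ext (funext fun p => p.elim0)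
  rw [F, Nat.card_unique]

/-! ### First return decomposition -/

lemma exists_touch {n : ℕ} (u : ETy (n + 1)) :
    ∃ m, ∃ h : m < n + 1, u.1 ⟨m, h⟩ = m + 1 :=
  ⟨n, n.lt_succ_self, u.2.2.2 ⟨n, n.lt_succ_self⟩ rfl⟩

/-- First index where the sequence touches the diagonal. -/
def fT {n : ℕ} (u : ETy (n + 1)) : ℕ := Nat.find (exists_touch u)

lemma fT_lt {n : ℕ} (u : ETy (n + 1)) : fT u < n + 1 := by
  obtain ⟨h, -⟩ := Nat.find_spec (exists_touch u); exact h

lemma fT_spec {n : ℕ} (u : ETy (n + 1)) : u.1 ⟨fT u, fT_lt u⟩ = fT u + 1 := by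
  obtain ⟨h, hs⟩ := Nat.find_spec (exists_touch u); exact hs

lemma fT_min {n : ℕ} (u : ETy (n + 1)) {m : ℕ} (h : m < n + 1) (hm : m < fT u) :
    m + 2 ≤ u.1 ⟨m, h⟩ := by
  have h1 := u.2.2.1 ⟨m, h⟩
  have h2 : u.1 ⟨m, h⟩ ≠ m + 1 := fun hc => Nat.find_min (exists_touch u) hm ⟨h, hc⟩
  simp only at h1
  omega

/-- Reconstruct a sequence from the two pieces. -/
def mkU (n j : ℕ) (A : Fin j → ℕ) (B : Fin (n - j) → ℕ) (p : Fin (n + 1)) : ℕ :=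
  if h : (p : ℕ) < j then A ⟨p, h⟩ + 1
  else if h2 : (p : ℕ) = j then j + 1
  else B ⟨(p : ℕ) - (j + 1), by have := p.isLt; omega⟩ + (j + 1)

/-- The first-return decomposition as an equivalence. -/
def fiberEquiv (n : ℕ) (j : Fin (n + 1)) :
    {u : ETy (n + 1) // fT u = (j : ℕ)} ≃ ETy (j : ℕ) × ETy (n - (j : ℕ)) where
  toFun x := by
    have hj := j.isLt
    have hfx := x.2
    refine (⟨fun p => x.1.1 ⟨p, by have := p.isLt; omega⟩ - 1, ?_, ?_, ?_⟩,
            ⟨fun q => x.1.1 ⟨(j : ℕ) + 1 + q, by have := q.isLt; omega⟩ - ((j : ℕ) + 1),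
              ?_, ?_, ?_⟩)
    · intro p q hpq
      refine Nat.sub_le_sub_right (x.1.2.1 ?_) 1
      rw [Fin.le_def]
      exact hpq
    · intro p
      have hp : (p : ℕ) < (j : ℕ) := p.isLt
      have hpn : (p : ℕ) < n + 1 := by omega
      show (p : ℕ) + 1 ≤ x.1.1 ⟨(p : ℕ), hpn⟩ - 1
      have h1 : (p : ℕ) + 2 ≤ x.1.1 ⟨(p : ℕ), hpn⟩ := fT_min x.1 hpn (by omega)
      omega
    · intro p hp
      have hp2 : (p : ℕ) < (j : ℕ) := p.isLt
      have hpn : (p : ℕ) < n + 1 := by omega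
      show x.1.1 ⟨(p : ℕ), hpn⟩ - 1 = (j : ℕ)
      have h1 : (p : ℕ) + 2 ≤ x.1.1 ⟨(p : ℕ), hpn⟩ := fT_min x.1 hpn (by omega)
      have h2 : x.1.1 ⟨(p : ℕ), hpn⟩ ≤ x.1.1 ⟨fT x.1, fT_lt x.1⟩ := by
        refine x.1.2.1 ?_
        rw [Fin.le_def]
        show (p : ℕ) ≤ fT x.1
        omega
      have h3 : x.1.1 ⟨fT x.1, fT_lt x.1⟩ = fT x.1 + 1 := fT_spec x.1
      omega
    · intro p q hpq
      refine Nat.sub_le_sub_right (x.1.2.1 ?_) _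
      rw [Fin.le_def]
      show (j : ℕ) + 1 + (p : ℕ) ≤ (j : ℕ) + 1 + (q : ℕ)
      have := (Fin.le_def).mp hpq
      omega
    · intro q
      have hq : (q : ℕ) < n - (j : ℕ) := q.isLt
      have hqn : (j : ℕ) + 1 + (q : ℕ) < n + 1 := by omega
      show (q : ℕ) + 1 ≤ x.1.1 ⟨(j : ℕ) + 1 + (q : ℕ), hqn⟩ - ((j : ℕ) + 1)
      have h1 : (j : ℕ) + 1 + (q : ℕ) + 1 ≤ x.1.1 ⟨(j : ℕ) + 1 + (q : ℕ), hqn⟩ :=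
        x.1.2.2.1 ⟨(j : ℕ) + 1 + (q : ℕ), hqn⟩
      omega
    · intro q hq
      have hq2 : (q : ℕ) < n - (j : ℕ) := q.isLt
      have hqn : (j : ℕ) + 1 + (q : ℕ) < n + 1 := by omega
      show x.1.1 ⟨(j : ℕ) + 1 + (q : ℕ), hqn⟩ - ((j : ℕ) + 1) = n - (j : ℕ)
      have h1 : x.1.1 ⟨(j : ℕ) + 1 + (q : ℕ), hqn⟩ = n + 1 :=
        x.1.2.2.2 ⟨(j : ℕ) + 1 + (q : ℕ), hqn⟩
          (show (j : ℕ) + 1 + (q : ℕ) + 1 = n + 1 by omega)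
      omega
  invFun AB := by
    have hj := j.isLt
    obtain ⟨A, B⟩ := AB
    have hAle : ∀ (m : ℕ) (hm : m < (j : ℕ)), A.1 ⟨m, hm⟩ ≤ (j : ℕ) :=
      fun m hm => A.2.le_r ⟨m, hm⟩
    have hAge : ∀ (m : ℕ) (hm : m < (j : ℕ)), m + 1 ≤ A.1 ⟨m, hm⟩ :=
      fun m hm => A.2.2.1 ⟨m, hm⟩
    have hBle : ∀ (m : ℕ) (hm : m < n - (j : ℕ)), B.1 ⟨m, hm⟩ ≤ n - (j : ℕ) :=
      fun m hm => B.2.le_r ⟨m, hm⟩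
    have hBge : ∀ (m : ℕ) (hm : m < n - (j : ℕ)), m + 1 ≤ B.1 ⟨m, hm⟩ :=
      fun m hm => B.2.2.1 ⟨m, hm⟩
    refine ⟨⟨mkU n (j : ℕ) A.1 B.1, ?_, ?_, ?_⟩, ?_⟩
    · -- Monotone
      intro p q hpq
      have hpq' : (p : ℕ) ≤ (q : ℕ) := (Fin.le_def).mp hpq
      have hp := p.isLt
      have hq := q.isLt
      unfold mkU
      split_ifs with h1 h2 h3 h4 h5 h6 h7 h8
      · -- both < j
        have : A.1 ⟨(p : ℕ), h1⟩ ≤ A.1 ⟨(q : ℕ), h2⟩ := by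
          refine A.2.1 ?_
          rw [Fin.le_def]
          exact hpq'
        omega
      · -- p < j, q = j
        have := hAle (p : ℕ) h1
        omega
      · -- p < j, q > j
        have := hAle (p : ℕ) h1
        have := hBge ((q : ℕ) - ((j : ℕ) + 1)) (by omega)
        omega
      · omega
      · omega
      · have := hBge ((q : ℕ) - ((j : ℕ) + 1)) (by omega)
        omega
      · omega
      · omega
      · have : B.1 ⟨(p : ℕ) - ((j : ℕ) + 1), by omega⟩ ≤
            B.1 ⟨(q : ℕ) - ((j : ℕ) + 1), by omega⟩ := by
          refine B.2.1 ?_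
          rw [Fin.le_def]
          show (p : ℕ) - ((j : ℕ) + 1) ≤ (q : ℕ) - ((j : ℕ) + 1)
          omega
        omega
    · -- lower bound
      intro p
      have hp := p.isLt
      unfold mkU
      split_ifs with h1 h2
      · have := hAge (p : ℕ) h1
        omega
      · omega
      · have := hBge ((p : ℕ) - ((j : ℕ) + 1)) (by omega)
        omega
    · -- last value
      intro p hp
      have hp2 := p.isLt
      have hpn : (p : ℕ) = n := by omega
      unfold mkU
      split_ifs with h1 h2
      · -- p < j impossible unless j = n+... j ≤ n, p = n < j impossible since j < n+1
        omega
      · omega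
      · have := B.2.2.2 ⟨(p : ℕ) - ((j : ℕ) + 1), by omega⟩ (by simp only; omega)
        omega
    · -- fT = j
      have hu : ∀ m : Fin (n + 1), (m : ℕ) ≤ (j : ℕ) →
          ((mkU n (j : ℕ) A.1 B.1 m = (m : ℕ) + 1) ↔ (m : ℕ) = (j : ℕ)) := by
        intro m hmj
        have hm := m.isLt
        unfold mkU
        split_ifs with h1 h2
        · have := hAge (m : ℕ) h1
          constructor
          · intro hc; omega
          · intro hc; omega
        · constructor
          · intro _; omega
          · intro _; omega
        · omega
      unfold fT
      rw [Nat.find_eq_iff]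
      refine ⟨⟨hj, ?_⟩, ?_⟩
      · exact (hu ⟨(j : ℕ), hj⟩ le_rfl).mpr rfl
      · rintro m hm ⟨hm2, hc⟩
        have h3 : ((⟨m, hm2⟩ : Fin (n + 1)) : ℕ) = (j : ℕ) := (hu ⟨m, hm2⟩ (by
            have h4 : ((⟨m, hm2⟩ : Fin (n + 1)) : ℕ) = m := rfl
            omega)).mp hc
        have h4 : ((⟨m, hm2⟩ : Fin (n + 1)) : ℕ) = m := rfl
        omega
  left_inv x := by
    have hj := j.isLt
    have hfx := x.2
    apply Subtype.ext
    apply Subtype.ext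
    funext p
    have hp := p.isLt
    show mkU n (j : ℕ) _ _ p = x.1.1 p
    unfold mkU
    split_ifs with h1 h2
    · have h3 : (p : ℕ) + 2 ≤ x.1.1 p := fT_min x.1 hp (by omega)
      show x.1.1 p - 1 + 1 = x.1.1 p
      omega
    · show (j : ℕ) + 1 = x.1.1 p
      have h3 : x.1.1 ⟨fT x.1, fT_lt x.1⟩ = fT x.1 + 1 := fT_spec x.1
      have h4 : x.1.1 ⟨fT x.1, fT_lt x.1⟩ = x.1.1 p :=
        congrArg x.1.1 (Fin.ext (show fT x.1 = (p : ℕ) by omega))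
      omega
    · have hpf : (j : ℕ) + 1 + ((p : ℕ) - ((j : ℕ) + 1)) < n + 1 := by omega
      show x.1.1 ⟨(j : ℕ) + 1 + ((p : ℕ) - ((j : ℕ) + 1)), hpf⟩ - ((j : ℕ) + 1) +
          ((j : ℕ) + 1) = x.1.1 p
      have h3 : x.1.1 ⟨(j : ℕ) + 1 + ((p : ℕ) - ((j : ℕ) + 1)), hpf⟩ = x.1.1 p :=
        congrArg x.1.1 (Fin.ext
          (show (j : ℕ) + 1 + ((p : ℕ) - ((j : ℕ) + 1)) = (p : ℕ) by omega))
      have h4 : (p : ℕ) + 1 ≤ x.1.1 p := x.1.2.2.1 p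
      omega
  right_inv AB := by
    have hj := j.isLt
    obtain ⟨A, B⟩ := AB
    ext : 1
    · apply Subtype.ext
      funext p
      have hp := p.isLt
      show mkU n (j : ℕ) A.1 B.1 ⟨(p : ℕ), by omega⟩ - 1 = A.1 p
      unfold mkU
      rw [dif_pos (show ((⟨(p : ℕ), by omega⟩ : Fin (n + 1)) : ℕ) < (j : ℕ) from hp)]
      simp only
      have : (⟨(p : ℕ), hp⟩ : Fin (j : ℕ)) = p := Fin.ext rfl
      rw [this]
      omega
    · apply Subtype.ext
      funext q
      have hq := q.isLt
      show mkU n (j : ℕ) A.1 B.1 ⟨(j : ℕ) + 1 + (q : ℕ), by omega⟩ - ((j : ℕ) + 1) = B.1 q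
      unfold mkU
      rw [dif_neg (by simp only; omega), dif_neg (by simp only; omega)]
      simp only
      have : (⟨(j : ℕ) + 1 + (q : ℕ) - ((j : ℕ) + 1), by omega⟩ : Fin (n - (j : ℕ))) = q := by
        apply Fin.ext
        show (j : ℕ) + 1 + (q : ℕ) - ((j : ℕ) + 1) = (q : ℕ)
        omega
      rw [this]
      omega

lemma F_succ (n : ℕ) : F (n + 1) = ∑ i : Fin (n + 1), F i * F (n - i) := by
  have e := (Equiv.sigmaFiberEquiv
    (fun u : ETy (n + 1) => (⟨fT u, fT_lt u⟩ : Fin (n + 1)))).symm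
  rw [F, Nat.card_congr e, Nat.card_eq_fintype_card, Fintype.card_sigma]
  refine Finset.sum_congr rfl fun jf _ => ?_
  have e2 : {u : ETy (n + 1) // (⟨fT u, fT_lt u⟩ : Fin (n + 1)) = jf} ≃
      {u : ETy (n + 1) // fT u = (jf : ℕ)} :=
    Equiv.subtypeEquivRight (fun u => by
      constructor
      · intro h; exact congrArg Fin.val h
      · intro h; exact Fin.ext h)
  rw [← Nat.card_eq_fintype_card, Nat.card_congr (e2.trans (fiberEquiv n jf)),
    Nat.card_prod]
  rfl

lemma F_eq_catalan : ∀ r : ℕ, F r = catalan r := by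
  intro r
  induction r using Nat.strong_induction_on with
  | _ r ih =>
    match r with
    | 0 => rw [F_zero, catalan_zero]
    | n + 1 =>
      rw [F_succ, catalan_succ]
      refine Finset.sum_congr rfl fun i _ => ?_
      have h1 := ih (i : ℕ) (by have := i.isLt; omega)
      have h2 := ih (n - (i : ℕ)) (by omega)
      rw [h1, h2]

/-! ### Partitions -/

/-- The partition associated to a sequence in `𝔈(k)`. -/
def toPart (k : ℕ) (t : {t : Fin k → ℕ // Epred 0 k t}) : Nat.Partition k where
  parts := seqTypeNat t.1
  parts_pos := by
    intro i hi
    unfold seqTypeNat at hi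
    obtain ⟨v, hv, rfl⟩ := Multiset.mem_map.mp hi
    rw [← Finset.mem_def] at hv
    obtain ⟨i0, -, hi0⟩ := Finset.mem_image.mp hv
    exact Finset.card_pos.mpr ⟨i0, Finset.mem_filter.mpr ⟨Finset.mem_univ _, hi0⟩⟩
  parts_sum := by
    show ((Finset.univ.image t.1).val.map
      (fun v => (Finset.univ.filter (fun i => t.1 i = v)).card)).sum = k
    have h := Finset.card_eq_sum_card_fiberwise
      (f := t.1) (s := Finset.univ) (t := Finset.univ.image t.1)
      (fun x _ => Finset.mem_image_of_mem _ (Finset.mem_univ x))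
    rw [Finset.card_univ, Fintype.card_fin] at h
    exact h.symm

lemma RC_eq (k : ℕ) (m : Multiset ℕ) (h : m.sum = k) :
    RC m = Nat.card {t : Fin k → ℕ // Epred 0 k t ∧ seqTypeNat t = m} := by
  subst h; rfl

/-- Fibers of `toPart`. -/
def partFiberEquiv (k : ℕ) (lam : Nat.Partition k) :
    {t : Fin k → ℕ // Epred 0 k t ∧ seqTypeNat t = lam.parts} ≃
      {x : {t : Fin k → ℕ // Epred 0 k t} // toPart k x = lam} where
  toFun t := ⟨⟨t.1, t.2.1⟩, Nat.Partition.ext t.2.2⟩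
  invFun x := ⟨x.1.1, x.1.2, congrArg Nat.Partition.parts x.2⟩
  left_inv t := rfl
  right_inv x := rfl

lemma sum_RC (k : ℕ) :
    ∑ lam : Nat.Partition k, RC lam.parts = Nat.card {t : Fin k → ℕ // Epred 0 k t} := by
  have e := (Equiv.sigmaFiberEquiv (toPart k)).symm
  rw [Nat.card_congr e, Nat.card_eq_fintype_card, Fintype.card_sigma]
  refine Finset.sum_congr rfl fun lam _ => ?_
  rw [RC_eq k lam.parts lam.parts_sum, ← Nat.card_eq_fintype_card,
    Nat.card_congr (partFiberEquiv k lam)]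

/-- `|𝔈(a;r)| = Cat_r = (1/(r+1))·binom(2r,r)`, and consequently
`Σ_{λ ⊢ k} RC(λ) = Cat_k`. -/
theorem card_E_eq_catalan (a r k : ℕ) (hr : 1 ≤ r) (hk : 1 ≤ k) :
    Nat.card {t : Fin r → ℕ // Epred a r t} = catalan r ∧
    catalan r = (2 * r).choose r / (r + 1) ∧
    ∑ lam : Nat.Partition k, RC lam.parts = catalan k := by
  refine ⟨?_, ?_, ?_⟩
  · rw [card_Epred, F_eq_catalan]
  · rw [catalan_eq_centralBinom_div]
    rfl
  · rw [sum_RC, card_Epred, F_eq_catalan]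
end
end

section
/- Let μ be a partition with |μ| = k and let n ≥ wt(μ). Then the coefficient in ℚ[S(n)] of the canonical permutation σ_μ in h_k(J_1,…,J_n) equals ∏_{i=1}^{ℓ(μ)} Cat_{μ_i}, where h_k is the complete homogeneous symmetric polynomial of degree k in n variables and Cat_r = (1/(r+1))·binom(2r,r) is the r-th Catalan number. In particular F_μ^{|μ|}(n) = ∏_{i} Cat_{μ_i} is independent of n. -/
noncomputable section
open scoped Classical

/-- `h_k(J_1, …, J_n)`: the complete homogeneous symmetric polynomial of degree `k` in `n`
variables evaluated at the Jucys–Murphy elements. -/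
def hEval (n k : ℕ) : GA n :=
  ∑ t ∈ Finset.univ.filter (fun t : Fin k → Fin n => Monotone t),
    ((List.ofFn t).map (JM n)).prod

/-- The cycle `(o+1, o+2, …, o+m+1)` (1-based), i.e. on zero-based points `o, …, o+m`. -/
def cycleOn (n : ℕ) (hn : 0 < n) (o m : ℕ) : Equiv.Perm (Fin n) :=
  ((List.range (m + 1)).map (fun j => (⟨(o + j) % n, Nat.mod_lt _ hn⟩ : Fin n))).formPerm

/-- Auxiliary: product of the canonical disjoint cycles on consecutive blocks. -/
def canonicalPermAux (n : ℕ) (hn : 0 < n) : ℕ → List ℕ → Equiv.Perm (Fin n)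
  | _, [] => 1
  | o, m :: rest => cycleOn n hn o m * canonicalPermAux n hn (o + m + 1) rest

/-- The canonical permutation `σ_μ` of reduced cycle type `μ`: the product of disjoint
cycles of lengths `μ_1+1, μ_2+1, …` on consecutive blocks of points. -/
def canonicalPerm (n : ℕ) (hn : 0 < n) (mu : List ℕ) : Equiv.Perm (Fin n) :=
  canonicalPermAux n hn 0 mu

def TTset (n k : ℕ) (B : Fin n) : Finset (Fin k → Fin n) :=
  Finset.univ.filter (fun t => Monotone t ∧ ∀ i, t i ≤ B)

def PP (n k : ℕ) (B : Fin n) : GA n :=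
  ∑ t ∈ TTset n k B, ((List.ofFn t).map (JM n)).prod

lemma PP_zero (n : ℕ) (B : Fin n) : PP n 0 B = 1 := by
  rw [PP]
  rw [show TTset n 0 B = {finZeroElim} from by
    ext t
    simp only [TTset, Finset.mem_filter, Finset.mem_univ, true_and, Finset.mem_singleton]
    constructor
    · intro _; exact Subsingleton.elim _ _
    · intro _; exact ⟨fun a b _ => by exact absurd a.2 (Nat.not_lt_zero _), fun i => i.elim0⟩]
  simp

lemma PP_succ (n k : ℕ) (B : Fin n) :
    PP n (k+1) B = ∑ b ∈ Finset.univ.filter (· ≤ B), PP n k b * JM n b := by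
  unfold PP
  rw [Finset.sum_congr rfl (fun b _ => Finset.sum_mul ..)]
  have key : ∑ t ∈ TTset n (k+1) B, ((List.ofFn t).map (JM n)).prod
      = ∑ p ∈ (Finset.univ.filter (· ≤ B)).sigma (fun b => TTset n k b),
          ((List.ofFn p.2).map (JM n)).prod * JM n p.1 := by
    refine Finset.sum_bij'
      (fun (t : Fin (k+1) → Fin n) (_ : t ∈ TTset n (k+1) B) =>
        (Sigma.mk (t (Fin.last k)) (Fin.init t) : (_b : Fin n) × (Fin k → Fin n)))
      (fun (p : (_b : Fin n) × (Fin k → Fin n)) _ => (Fin.snoc p.2 p.1 : Fin (k+1) → Fin n))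
      ?_ ?_ ?_ ?_ ?_
    · intro t ht
      simp only [TTset, Finset.mem_filter, Finset.mem_univ, true_and] at ht
      obtain ⟨hmono, hb⟩ := ht
      simp only [Finset.mem_sigma, Finset.mem_filter, Finset.mem_univ, true_and, TTset]
      refine ⟨hb _, ?_, fun i => hmono (Fin.le_last i.castSucc)⟩
      exact fun i j hij => hmono (Fin.castSucc_le_castSucc_iff.mpr hij)
    · intro p hp
      simp only [Finset.mem_sigma, Finset.mem_filter, Finset.mem_univ, true_and, TTset] at hp
      obtain ⟨hB, hmono, hle⟩ := hp
      simp only [TTset, Finset.mem_filter, Finset.mem_univ, true_and]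
      constructor
      · rw [Fin.monotone_iff_le_succ]
        intro i
        rcases eq_or_ne i.succ (Fin.last k) with h | h
        · rw [h, Fin.snoc_last, Fin.snoc_castSucc]; exact hle i
        · obtain ⟨j, hj⟩ := Fin.eq_castSucc_of_ne_last h
          rw [← hj, Fin.snoc_castSucc, Fin.snoc_castSucc]
          refine hmono ?_
          have : (j : ℕ) = (i : ℕ) + 1 := by
            have := congrArg Fin.val hj
            simpa using this
          exact Fin.le_def.mpr (by omega)
      · intro i
        refine Fin.lastCases ?_ (fun j => ?_) i
        · rw [Fin.snoc_last]; exact hB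
        · rw [Fin.snoc_castSucc]; exact (hle j).trans hB
    · intro t ht; exact Fin.snoc_init_self t
    · intro p hp
      simp [Fin.init_snoc]
    · intro t ht
      rw [List.ofFn_succ']
      simp only [List.concat_eq_append, List.map_append, List.prod_append, List.map_cons,
        List.map_nil, List.prod_cons, List.prod_nil, mul_one]
      rfl
  rw [key, Finset.sum_sigma]

lemma PP_zero_apply (n : ℕ) (B : Fin n) (σ : Equiv.Perm (Fin n)) :
    (PP n 0 B).coeff σ = if σ = 1 then 1 else 0 := by
  rw [PP_zero, MonoidAlgebra.one_def, MonoidAlgebra.single_apply]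
  simp [eq_comm]

lemma PP_succ_apply (n k : ℕ) (B : Fin n) (σ : Equiv.Perm (Fin n)) :
    (PP n (k+1) B).coeff σ = ∑ b ∈ Finset.univ.filter (· ≤ B),
      ∑ s ∈ Finset.univ.filter (· < b), (PP n k b).coeff (σ * Equiv.swap s b) := by
  rw [PP_succ, MonoidAlgebra.coeff_sum, Finsupp.finset_sum_apply]
  refine Finset.sum_congr rfl fun b _ => ?_
  rw [JM, Finset.mul_sum, MonoidAlgebra.coeff_sum, Finsupp.finset_sum_apply]
  refine Finset.sum_congr rfl fun s _ => ?_
  rw [MonoidAlgebra.mul_single_apply, mul_one, Equiv.swap_inv]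

lemma PP_eq_zero_of_unbounded_support (n : ℕ) : ∀ (k : ℕ) (B : Fin n) (π : Equiv.Perm (Fin n))
    (x : Fin n), π x ≠ x → ¬ x ≤ B → (PP n k B).coeff π = 0 := by
  intro k
  induction k with
  | zero =>
    intro B π x hx _
    rw [PP_zero_apply]
    have : π ≠ 1 := fun h => hx (by simp [h])
    simp [this]
  | succ k ih =>
    intro B π x hx hB
    rw [PP_succ_apply]
    refine Finset.sum_eq_zero fun b hb => Finset.sum_eq_zero fun s hs => ?_
    simp only [Finset.mem_filter, Finset.mem_univ, true_and] at hb hs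
    have hxb : b < x := lt_of_not_ge (fun h => hB (h.trans hb))
    have hxs : s ≠ x := ne_of_lt (hs.trans hxb)
    have hxb' : b ≠ x := ne_of_lt hxb
    refine ih b (π * Equiv.swap s b) x ?_ (fun h => hB (h.trans hb) |>.elim)
    · rw [Equiv.Perm.mul_apply, Equiv.swap_apply_of_ne_of_ne (Ne.symm hxs) (Ne.symm hxb')]
      exact hx

def FixS (n : ℕ) (π : Equiv.Perm (Fin n)) : Submodule ℚ (Fin n → ℚ) where
  carrier := {f | ∀ x, f (π x) = f x}
  add_mem' := fun hf hg => fun x => by simp [hf x, hg x]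
  zero_mem' := fun x => rfl
  smul_mem' := fun c f hf => fun x => by simp [hf x]

lemma mem_FixS {n : ℕ} {π : Equiv.Perm (Fin n)} {f : Fin n → ℚ} :
    f ∈ FixS n π ↔ ∀ x, f (π x) = f x := Iff.rfl

def dF (n : ℕ) (π : Equiv.Perm (Fin n)) : ℕ := Module.finrank ℚ (FixS n π)

lemma FixS_one (n : ℕ) : FixS n 1 = ⊤ := by
  ext f; simp [mem_FixS]

lemma dF_one (n : ℕ) : dF n 1 = n := by
  rw [dF, FixS_one, finrank_top, Module.finrank_fintype_fun_eq_card, Fintype.card_fin]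

lemma FixS_inf_le (n : ℕ) (π τ : Equiv.Perm (Fin n)) :
    FixS n π ⊓ FixS n τ ≤ FixS n (π * τ) := by
  rintro f ⟨hπ, hτ⟩ x
  rw [Equiv.Perm.mul_apply, hπ, hτ]

lemma dF_swap_ge (n : ℕ) (s t : Fin n) : n ≤ dF n (Equiv.swap s t) + 1 := by
  classical
  set φ : (Fin n → ℚ) →ₗ[ℚ] ℚ := (LinearMap.proj s : (Fin n → ℚ) →ₗ[ℚ] ℚ) - (LinearMap.proj t : (Fin n → ℚ) →ₗ[ℚ] ℚ) with hφ
  have hker : LinearMap.ker φ ≤ FixS n (Equiv.swap s t) := by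
    intro f hf
    have hst : f s = f t := by
      have : f s - f t = 0 := hf
      linarith
    intro x
    rcases eq_or_ne x s with rfl | hxs
    · rw [Equiv.swap_apply_left, hst]
    rcases eq_or_ne x t with rfl | hxt
    · rw [Equiv.swap_apply_right, hst]
    · rw [Equiv.swap_apply_of_ne_of_ne hxs hxt]
  have h1 : Module.finrank ℚ (LinearMap.range φ) + Module.finrank ℚ (LinearMap.ker φ)
      = Module.finrank ℚ (Fin n → ℚ) := LinearMap.finrank_range_add_finrank_ker φ
  have h2 : Module.finrank ℚ (LinearMap.range φ) ≤ 1 := by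
    simpa using Submodule.finrank_le (LinearMap.range φ)
  have h3 : Module.finrank ℚ (LinearMap.ker φ) ≤ dF n (Equiv.swap s t) :=
    Submodule.finrank_mono hker
  rw [Module.finrank_fintype_fun_eq_card, Fintype.card_fin] at h1
  omega

lemma dF_mul_swap_le (n : ℕ) (π : Equiv.Perm (Fin n)) (s t : Fin n) :
    dF n (π * Equiv.swap s t) ≤ dF n π + 1 := by
  have hle : FixS n (π * Equiv.swap s t) ⊓ FixS n (Equiv.swap s t) ≤ FixS n π := by
    refine le_trans (FixS_inf_le n _ _) ?_
    rw [mul_assoc, Equiv.swap_mul_self, mul_one]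
  have h1 := Submodule.finrank_sup_add_finrank_inf_eq
    (FixS n (π * Equiv.swap s t)) (FixS n (Equiv.swap s t))
  have h2 : Module.finrank ℚ
      ((FixS n (π * Equiv.swap s t)) ⊔ (FixS n (Equiv.swap s t)) : Submodule ℚ (Fin n → ℚ)) ≤ n := by
    have := Submodule.finrank_le ((FixS n (π * Equiv.swap s t)) ⊔ (FixS n (Equiv.swap s t)))
    rwa [Module.finrank_fintype_fun_eq_card, Fintype.card_fin] at this
  have h3 : Module.finrank ℚ
      ((FixS n (π * Equiv.swap s t)) ⊓ (FixS n (Equiv.swap s t)) : Submodule ℚ (Fin n → ℚ))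
      ≤ dF n π := Submodule.finrank_mono hle
  have h4 := dF_swap_ge n s t
  unfold dF at *
  omega

lemma dF_ge_of_mul_swap (n : ℕ) (π : Equiv.Perm (Fin n)) (s t : Fin n) :
    dF n π ≤ dF n (π * Equiv.swap s t) + 1 := by
  have := dF_mul_swap_le n (π * Equiv.swap s t) s t
  rwa [mul_assoc, Equiv.swap_mul_self, mul_one] at this

lemma FixS_lt_of_merge (n : ℕ) (π : Equiv.Perm (Fin n)) (s t : Fin n) (hst : s ≠ t)
    (h : ∀ i : ℕ, (π ^ i) t ≠ s) : FixS n (π * Equiv.swap s t) < FixS n π := by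
  have horder : 0 < orderOf π := orderOf_pos π
  constructor
  · -- FixS (π * swap) ≤ FixS π
    intro f hf
    have hf' : ∀ x, f (π (Equiv.swap s t x)) = f x := hf
    have hoff : ∀ x, x ≠ s → x ≠ t → f (π x) = f x := by
      intro x hs ht
      have := hf' x
      rwa [Equiv.swap_apply_of_ne_of_ne hs ht] at this
    have hs' : f (π t) = f s := by have := hf' s; rwa [Equiv.swap_apply_left] at this
    have ht' : f (π s) = f t := by have := hf' t; rwa [Equiv.swap_apply_right] at this
    have key : ∀ i, 1 ≤ i → f ((π ^ i) t) = f (π t) := by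
      intro i
      induction i with
      | zero => omega
      | succ i ih =>
        intro _
        rcases Nat.eq_zero_or_pos i with rfl | hi
        · rw [zero_add, pow_one]
        · have hstep : (π ^ (i+1)) t = π ((π ^ i) t) := by
            rw [pow_succ', Equiv.Perm.mul_apply]
          rcases eq_or_ne ((π ^ i) t) t with he | he
          · rw [hstep, he]
          · rw [hstep, hoff _ (h i) he, ih hi]
    have hft : f s = f t := by
      have h1 : f ((π ^ orderOf π) t) = f (π t) := key _ horder
      rw [pow_orderOf_eq_one] at h1
      simp only [Equiv.Perm.one_apply] at h1
      rw [← hs', h1]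
    intro x
    rcases eq_or_ne x s with rfl | hxs
    · rw [ht', hft]
    rcases eq_or_ne x t with rfl | hxt
    · rw [hs', hft]
    · exact hoff x hxs hxt
  · -- strictness
    intro hcontra
    set O : Set (Fin n) := {x | ∃ i : ℕ, (π ^ i) t = x} with hO
    set g : Fin n → ℚ := fun x => if x ∈ O then 1 else 0 with hg
    have hOclosed : ∀ x, π x ∈ O ↔ x ∈ O := by
      intro x
      constructor
      · rintro ⟨i, hi⟩
        refine ⟨(orderOf π - 1) + i, ?_⟩
        have hx : (π ^ (orderOf π - 1)) (π x) = x := by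
          have h1 : π ^ (orderOf π - 1) * π = 1 := by
            rw [← pow_succ, Nat.sub_add_cancel horder, pow_orderOf_eq_one]
          calc (π ^ (orderOf π - 1)) (π x) = (π ^ (orderOf π - 1) * π) x := rfl
            _ = x := by rw [h1]; rfl
        rw [pow_add, Equiv.Perm.mul_apply, hi, hx]
      · rintro ⟨i, hi⟩
        exact ⟨i + 1, by rw [pow_succ', Equiv.Perm.mul_apply, hi]⟩
    have hgFix : g ∈ FixS n π := by
      intro x
      simp only [hg]
      congr 1
      exact propext ((hOclosed x))
    have hgFix' := hcontra hgFix
    have h1 : g ((π * Equiv.swap s t) s) = g s := hgFix' s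
    rw [Equiv.Perm.mul_apply, Equiv.swap_apply_left] at h1
    have hπtO : π t ∈ O := ⟨1, by rw [pow_one]⟩
    have hsO : s ∉ O := by rintro ⟨i, hi⟩; exact h i hi
    rw [hg] at h1
    simp only [hπtO, if_pos, hsO, if_neg, if_false] at h1
    exact one_ne_zero h1

lemma dF_lt_of_merge (n : ℕ) (π : Equiv.Perm (Fin n)) (s t : Fin n) (hst : s ≠ t)
    (h : ∀ i : ℕ, (π ^ i) t ≠ s) : dF n (π * Equiv.swap s t) < dF n π :=
  Submodule.finrank_lt_finrank_of_lt (FixS_lt_of_merge n π s t hst h)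

lemma finrank_le_card_of_restrict_inj (n : ℕ) (p : Submodule ℚ (Fin n → ℚ)) (T : Finset (Fin n))
    (h : ∀ f ∈ p, (∀ x ∈ T, f x = 0) → f = 0) : Module.finrank ℚ p ≤ T.card := by
  classical
  set φ : (Fin n → ℚ) →ₗ[ℚ] ({x // x ∈ T} → ℚ) :=
    LinearMap.funLeft ℚ ℚ (fun x : {x // x ∈ T} => (x : Fin n)) with hφ
  have hinj : Function.Injective (φ.comp p.subtype) := by
    rw [← LinearMap.ker_eq_bot, LinearMap.ker_eq_bot']
    intro f hf
    have : (f : Fin n → ℚ) = 0 := by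
      refine h f f.2 fun x hx => ?_
      have := congrFun hf ⟨x, hx⟩
      exact this
    exact Subtype.ext this
  have := LinearMap.finrank_le_finrank_of_injective hinj
  rw [Module.finrank_fintype_fun_eq_card] at this
  rwa [Fintype.card_of_subtype T (fun x => Iff.rfl)] at this

def offs (l : List ℕ) : ℕ := (l.map Nat.succ).sum

@[simp] lemma offs_nil : offs [] = 0 := rfl
@[simp] lemma offs_cons (m : ℕ) (l : List ℕ) : offs (m :: l) = (m + 1) + offs l := by
  simp [offs, Nat.succ_eq_add_one]

lemma offs_append (l₁ l₂ : List ℕ) : offs (l₁ ++ l₂) = offs l₁ + offs l₂ := by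
  simp [offs]

lemma sum_le_offs (l : List ℕ) : l.sum ≤ offs l := by
  induction l with
  | nil => simp
  | cons m l ih => simp only [List.sum_cons, offs_cons]; omega

lemma offs_eq_sum_add_length (l : List ℕ) : offs l = l.sum + l.length := by
  induction l with
  | nil => simp
  | cons m l ih => simp [ih]; omega

section CycleOn
variable {n : ℕ} (hn : 0 < n) {o m : ℕ}

lemma cycleOn_list_get (h : o + m < n) (j : ℕ) (hj : j < m + 1) :
    ((List.range (m + 1)).map (fun j => (⟨(o + j) % n, Nat.mod_lt _ hn⟩ : Fin n)))[j]'(by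
      simpa using hj) = ⟨o + j, by omega⟩ := by
  simp only [List.getElem_map, List.getElem_range]
  exact Fin.ext (Nat.mod_eq_of_lt (by omega))

lemma cycleOn_nodup (h : o + m < n) :
    ((List.range (m + 1)).map (fun j => (⟨(o + j) % n, Nat.mod_lt _ hn⟩ : Fin n))).Nodup := by
  refine List.Nodup.map_on ?_ List.nodup_range
  intro x hx y hy hxy
  simp only [List.mem_range] at hx hy
  have hx' : (o + x) % n = o + x := Nat.mod_eq_of_lt (by omega)
  have hy' : (o + y) % n = o + y := Nat.mod_eq_of_lt (by omega)
  have := congrArg Fin.val hxy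
  simp only [hx', hy'] at this
  omega

lemma mem_cycleOn_list (h : o + m < n) (x : Fin n) :
    x ∈ ((List.range (m + 1)).map (fun j => (⟨(o + j) % n, Nat.mod_lt _ hn⟩ : Fin n)))
      ↔ o ≤ x.val ∧ x.val ≤ o + m := by
  simp only [List.mem_map, List.mem_range]
  constructor
  · rintro ⟨j, hj, rfl⟩
    have : (o + j) % n = o + j := Nat.mod_eq_of_lt (by omega)
    simp [this]; omega
  · rintro ⟨h1, h2⟩
    refine ⟨x.val - o, by omega, ?_⟩
    have : o + (x.val - o) = x.val := by omega
    rw [this]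
    exact Fin.ext (Nat.mod_eq_of_lt x.isLt)

lemma cycleOn_apply_of_lt (h : o + m < n) (x : Fin n) (hx : x.val < o) :
    cycleOn n hn o m x = x := by
  rw [cycleOn]
  refine List.formPerm_apply_of_notMem ?_
  rw [mem_cycleOn_list hn h]
  omega

lemma cycleOn_apply_of_gt (h : o + m < n) (x : Fin n) (hx : o + m < x.val) :
    cycleOn n hn o m x = x := by
  rw [cycleOn]
  refine List.formPerm_apply_of_notMem ?_
  rw [mem_cycleOn_list hn h]
  omega

lemma cycleOn_apply (h : o + m < n) (j : ℕ) (hj : j ≤ m) :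
    cycleOn n hn o m ⟨o + j, by omega⟩ = ⟨o + ((j + 1) % (m + 1)), by
      have := Nat.mod_lt (j+1) (show 0 < m+1 by omega); omega⟩ := by
  rw [cycleOn]
  have hlen : ((List.range (m + 1)).map
      (fun j => (⟨(o + j) % n, Nat.mod_lt _ hn⟩ : Fin n))).length = m + 1 := by simp
  have h1 := List.formPerm_apply_getElem _ (cycleOn_nodup hn h) j (by omega)
  rw [cycleOn_list_get hn h j (by omega)] at h1
  simp only [hlen] at h1
  rw [h1]
  exact cycleOn_list_get hn h ((j+1) % (m+1)) (Nat.mod_lt _ (by omega))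

lemma cycleOn_apply_mid (h : o + m < n) (j : ℕ) (hj : j < m) :
    cycleOn n hn o m ⟨o + j, by omega⟩ = ⟨o + j + 1, by omega⟩ := by
  have := cycleOn_apply hn h j (le_of_lt hj)
  rw [this]
  have : (j + 1) % (m + 1) = j + 1 := Nat.mod_eq_of_lt (by omega)
  simp only [this]
  exact Fin.ext (by simp; omega)

lemma cycleOn_apply_last (h : o + m < n) :
    cycleOn n hn o m ⟨o + m, by omega⟩ = ⟨o, by omega⟩ := by
  have := cycleOn_apply hn h m le_rfl
  rw [this]
  simp

lemma cycleOn_zero (h : o < n) : cycleOn n hn o 0 = 1 := by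
  rw [cycleOn, show List.range 1 = [0] from rfl]
  simp [List.formPerm_singleton]

lemma cycleOn_mem_range (h : o + m < n) (x : Fin n) (h1 : o ≤ x.val) (h2 : x.val ≤ o + m) :
    o ≤ (cycleOn n hn o m x).val ∧ (cycleOn n hn o m x).val ≤ o + m := by
  have hx : x = ⟨o + (x.val - o), by omega⟩ :=
    Fin.ext (show x.val = o + (x.val - o) by omega)
  rw [hx, cycleOn_apply hn h (x.val - o) (by omega)]
  have := Nat.mod_lt (x.val - o + 1) (show 0 < m+1 by omega)
  constructor
  · exact Nat.le_add_right o _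
  · show o + ((x.val - o + 1) % (m+1)) ≤ o + m
    omega

end CycleOn

section Canon
variable {n : ℕ} (hn : 0 < n)

lemma canonAux_fix_low : ∀ (l : List ℕ) (o : ℕ), o + offs l ≤ n →
    ∀ x : Fin n, x.val < o → canonicalPermAux n hn o l x = x := by
  intro l
  induction l with
  | nil => intro o _ x _; rfl
  | cons m rest ih =>
    intro o hfit x hx
    have h1 : o + m < n := by simp [offs_cons] at hfit; omega
    have h2 : (o + m + 1) + offs rest ≤ n := by simp [offs_cons] at hfit; omega
    show (cycleOn n hn o m * canonicalPermAux n hn (o + m + 1) rest) x = x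
    rw [Equiv.Perm.mul_apply, ih (o + m + 1) h2 x (by omega), cycleOn_apply_of_lt hn h1 x hx]

lemma canonAux_fix_high : ∀ (l : List ℕ) (o : ℕ), o + offs l ≤ n →
    ∀ x : Fin n, o + offs l ≤ x.val → canonicalPermAux n hn o l x = x := by
  intro l
  induction l with
  | nil => intro o _ x _; rfl
  | cons m rest ih =>
    intro o hfit x hx
    simp only [offs_cons] at hfit hx
    have h1 : o + m < n := by omega
    have h2 : (o + m + 1) + offs rest ≤ n := by omega
    show (cycleOn n hn o m * canonicalPermAux n hn (o + m + 1) rest) x = x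
    rw [Equiv.Perm.mul_apply, ih (o + m + 1) h2 x (by omega),
      cycleOn_apply_of_gt hn h1 x (by omega)]

lemma canonAux_mem_range : ∀ (l : List ℕ) (o : ℕ), o + offs l ≤ n →
    ∀ x : Fin n, o ≤ x.val → x.val < o + offs l →
    o ≤ (canonicalPermAux n hn o l x).val ∧ (canonicalPermAux n hn o l x).val < o + offs l := by
  intro l
  induction l with
  | nil => intro o _ x h1 h2; simp at h1 h2; omega
  | cons m rest ih =>
    intro o hfit x h1 h2
    simp only [offs_cons] at hfit h2 ⊢
    have hc1 : o + m < n := by omega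
    have hc2 : (o + m + 1) + offs rest ≤ n := by omega
    have hcanon : canonicalPermAux n hn o (m :: rest)
        = cycleOn n hn o m * canonicalPermAux n hn (o + m + 1) rest := rfl
    rw [hcanon, Equiv.Perm.mul_apply]
    rcases Nat.lt_or_ge x.val (o + m + 1) with hx | hx
    · rw [canonAux_fix_low hn rest (o + m + 1) hc2 x hx]
      have := cycleOn_mem_range hn hc1 x h1 (by omega)
      omega
    · have hr := ih (o + m + 1) hc2 x hx (by omega)
      rw [cycleOn_apply_of_gt hn hc1 _ (by omega)]
      omega

lemma canonAux_append : ∀ (l₁ l₂ : List ℕ) (o : ℕ),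
    canonicalPermAux n hn o (l₁ ++ l₂) =
      canonicalPermAux n hn o l₁ * canonicalPermAux n hn (o + offs l₁) l₂ := by
  intro l₁
  induction l₁ with
  | nil => intro l₂ o; simp [canonicalPermAux]
  | cons m rest ih =>
    intro l₂ o
    show cycleOn n hn o m * canonicalPermAux n hn (o + m + 1) (rest ++ l₂) = _
    rw [ih]
    have : o + m + 1 + offs rest = o + offs (m :: rest) := by simp [offs_cons]; omega
    rw [this, ← mul_assoc]
    rfl

lemma canonAux_zeros : ∀ (z : List ℕ) (o : ℕ), o + offs z ≤ n → (∀ x ∈ z, x = 0) →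
    canonicalPermAux n hn o z = 1 := by
  intro z
  induction z with
  | nil => intro o _ _; rfl
  | cons m rest ih =>
    intro o hfit hz
    have hm : m = 0 := hz m List.mem_cons_self
    subst hm
    simp only [offs_cons] at hfit
    show cycleOn n hn o 0 * canonicalPermAux n hn (o + 0 + 1) rest = 1
    rw [cycleOn_zero hn (by omega), ih (o + 0 + 1) (by omega) (fun x hx => hz x (by simp [hx])),
      one_mul]

end Canon

def Inr : ℕ → List ℕ → ℕ → Prop
  | _, [], _ => False
  | o, m :: rest, p => (o < p ∧ p ≤ o + m) ∨ Inr (o + m + 1) rest p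

lemma Inr_bounds : ∀ (l : List ℕ) (o p : ℕ), Inr o l p → o < p ∧ p < o + offs l := by
  intro l
  induction l with
  | nil => intro o p h; exact absurd h (by simp [Inr])
  | cons m rest ih =>
    intro o p h
    simp only [offs_cons]
    rcases h with ⟨h1, h2⟩ | h
    · omega
    · have := ih _ _ h
      omega

lemma card_Inr {n : ℕ} : ∀ (l : List ℕ) (o : ℕ), o + offs l ≤ n →
    (Finset.univ.filter (fun x : Fin n => Inr o l x.val)).card = l.sum := by
  intro l
  induction l with
  | nil => intro o _; simp only [List.sum_nil, Finset.card_eq_zero, Finset.filter_eq_empty_iff]; intro x _ h; exact h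
  | cons m rest ih =>
    intro o hfit
    simp only [offs_cons] at hfit
    have hsplit : (Finset.univ.filter (fun x : Fin n => Inr o (m :: rest) x.val))
        = (Finset.univ.filter (fun x : Fin n => o < x.val ∧ x.val ≤ o + m))
          ∪ (Finset.univ.filter (fun x : Fin n => Inr (o + m + 1) rest x.val)) := by
      ext x
      simp only [Finset.mem_filter, Finset.mem_univ, true_and, Finset.mem_union]
      exact Iff.rfl
    rw [hsplit, Finset.card_union_of_disjoint, List.sum_cons]
    · congr 1
      · have hIoc : (Finset.univ.filter (fun x : Fin n => o < x.val ∧ x.val ≤ o + m))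
            = Finset.Ioc (⟨o, by omega⟩ : Fin n) ⟨o + m, by omega⟩ := by
          ext x
          simp only [Finset.mem_filter, Finset.mem_univ, true_and, Finset.mem_Ioc]
          rw [Fin.lt_def, Fin.le_def]
        rw [hIoc, Fin.card_Ioc]
        simp
      · exact ih (o + m + 1) (by omega)
    · rw [Finset.disjoint_left]
      intro x hx1 hx2
      simp only [Finset.mem_filter, Finset.mem_univ, true_and] at hx1 hx2
      have := Inr_bounds rest (o + m + 1) x.val hx2
      omega

lemma canon_fix_zero {n : ℕ} (hn : 0 < n) : ∀ (l : List ℕ) (o : ℕ), o + offs l ≤ n →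
    ∀ f : Fin n → ℚ, (∀ x, f (canonicalPermAux n hn o l x) = f x) →
    (∀ x : Fin n, ¬ Inr o l x.val → f x = 0) → ∀ x, f x = 0 := by
  intro l
  induction l with
  | nil => intro o _ f _ h0 x; exact h0 x (by simp [Inr])
  | cons m rest ih =>
    intro o hfit f hfix h0 x
    simp only [offs_cons] at hfit
    have hc1 : o + m < n := by omega
    have hc2 : (o + m + 1) + offs rest ≤ n := by omega
    have hcanon : canonicalPermAux n hn o (m :: rest)
        = cycleOn n hn o m * canonicalPermAux n hn (o + m + 1) rest := rfl
    -- block constancy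
    have hblock : ∀ j, ∀ hj : j ≤ m, f ⟨o + j, by omega⟩ = f ⟨o, by omega⟩ := by
      intro j
      induction j with
      | zero => intro _; rfl
      | succ j ihj =>
        intro hj
        have hstep := hfix ⟨o + j, by omega⟩
        rw [hcanon, Equiv.Perm.mul_apply,
          canonAux_fix_low hn rest (o + m + 1) hc2 ⟨o + j, by omega⟩
            (show o + j < o + m + 1 by omega),
          cycleOn_apply_mid hn hc1 j (by omega)] at hstep
        have : (⟨o + j + 1, by omega⟩ : Fin n) = ⟨o + (j + 1), by omega⟩ :=
          Fin.ext (show o + j + 1 = o + (j + 1) by omega)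
        rw [this] at hstep
        rw [hstep]
        exact ihj (by omega)
    have hzero_o : f ⟨o, by omega⟩ = 0 := by
      refine h0 _ ?_
      intro hIn
      rcases hIn with ⟨h1, _⟩ | h
      · simp at h1
      · have := Inr_bounds rest (o + m + 1) _ h
        simp at this; omega
    have hblock0 : ∀ y : Fin n, o ≤ y.val → y.val ≤ o + m → f y = 0 := by
      intro y h1 h2
      have hy : y = ⟨o + (y.val - o), by omega⟩ := Fin.ext (show y.val = o + (y.val - o) by omega)
      rw [hy, hblock (y.val - o) (by omega), hzero_o]
    -- transfer fix to rest
    have hfix' : ∀ x, f (canonicalPermAux n hn (o + m + 1) rest x) = f x := by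
      intro y
      rcases Nat.lt_or_ge y.val (o + m + 1) with hy | hy
      · rw [canonAux_fix_low hn rest (o + m + 1) hc2 y hy]
      rcases Nat.lt_or_ge y.val ((o + m + 1) + offs rest) with hy2 | hy2
      · have hmem := canonAux_mem_range hn rest (o + m + 1) hc2 y hy hy2
        have := hfix y
        rw [hcanon, Equiv.Perm.mul_apply,
          cycleOn_apply_of_gt hn hc1 _ (by omega)] at this
        exact this
      · rw [canonAux_fix_high hn rest (o + m + 1) hc2 y hy2]
    refine ih (o + m + 1) hc2 f hfix' ?_ x
    intro y hy
    rcases Nat.lt_or_ge y.val (o + 1) with h1 | h1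
    · rcases Nat.lt_or_ge y.val o with h2 | h2
      · refine h0 y ?_
        intro hIn
        rcases hIn with ⟨hA, _⟩ | hB
        · omega
        · have := Inr_bounds rest (o + m + 1) _ hB; omega
      · exact hblock0 y (by omega) (by omega)
    rcases Nat.lt_or_ge (o + m) y.val with h2 | h2
    · refine h0 y ?_
      intro hIn
      rcases hIn with ⟨hA, hA2⟩ | hB
      · omega
      · exact hy hB
    · exact hblock0 y (by omega) (by omega)

section Split
variable {n : ℕ} (hn : 0 < n) {o m : ℕ}

lemma cycleOn_val_mid (h : o + m < n) (x : Fin n) (h1 : o ≤ x.val) (h2 : x.val < o + m) :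
    (cycleOn n hn o m x).val = x.val + 1 := by
  have hx : x = ⟨o + (x.val - o), by omega⟩ :=
    Fin.ext (show x.val = o + (x.val - o) by omega)
  rw [hx, cycleOn_apply_mid hn h (x.val - o) (by omega)]

lemma cycleOn_val_last (h : o + m < n) (x : Fin n) (h1 : x.val = o + m) :
    (cycleOn n hn o m x).val = o := by
  have hx : x = ⟨o + m, by omega⟩ := Fin.ext (show x.val = o + m by omega)
  rw [hx, cycleOn_apply_last hn h]

lemma cycleOn_split (h : o + m < n) (j : ℕ) (hj : j < m) :
    cycleOn n hn o m * Equiv.swap ⟨o + j, by omega⟩ ⟨o + m, by omega⟩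
      = cycleOn n hn o j * cycleOn n hn (o + j + 1) (m - j - 1) := by
  have hfit1 : o + j < n := by omega
  have hfit2 : (o + j + 1) + (m - j - 1) < n := by omega
  apply Equiv.ext
  intro x
  apply Fin.ext
  rw [Equiv.Perm.mul_apply, Equiv.Perm.mul_apply]
  rcases Nat.lt_or_ge x.val o with h1 | h1
  · rw [Equiv.swap_apply_of_ne_of_ne (Fin.ne_of_val_ne (show x.val ≠ o + j by omega))
        (Fin.ne_of_val_ne (show x.val ≠ o + m by omega)),
      cycleOn_apply_of_lt hn h x (by omega),
      cycleOn_apply_of_lt hn hfit2 x (by omega),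
      cycleOn_apply_of_lt hn hfit1 x (by omega)]
  rcases Nat.lt_or_ge x.val (o + j) with h2 | h2
  · rw [Equiv.swap_apply_of_ne_of_ne (Fin.ne_of_val_ne (show x.val ≠ o + j by omega))
        (Fin.ne_of_val_ne (show x.val ≠ o + m by omega)),
      cycleOn_apply_of_lt hn hfit2 x (by omega)]
    rw [cycleOn_val_mid hn h x h1 (by omega), cycleOn_val_mid hn hfit1 x h1 (by omega)]
  rcases Nat.eq_or_lt_of_le h2 with h3 | h3
  · have hx : x = ⟨o + j, by omega⟩ := Fin.ext (show x.val = o + j by omega)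
    rw [hx, Equiv.swap_apply_left, cycleOn_apply_last hn h]
    rw [cycleOn_apply_of_lt hn hfit2 _ (show (o:ℕ) + j < o + j + 1 by omega)]
    rw [cycleOn_val_last hn hfit1 _ (show (o:ℕ) + j = o + j by rfl)]
  rcases Nat.lt_or_ge x.val (o + m) with h4 | h4
  · rw [Equiv.swap_apply_of_ne_of_ne (Fin.ne_of_val_ne (show x.val ≠ o + j by omega))
        (Fin.ne_of_val_ne (show x.val ≠ o + m by omega)),
      cycleOn_val_mid hn h x (by omega) (by omega)]
    have hmid := cycleOn_val_mid hn hfit2 x (by omega) (by omega)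
    rw [cycleOn_apply_of_gt hn hfit1 _ (by omega), hmid]
  rcases Nat.eq_or_lt_of_le h4 with h5 | h5
  · have hx : x = ⟨o + m, by omega⟩ := Fin.ext (show x.val = o + m by omega)
    rw [hx, Equiv.swap_apply_right]
    rw [show cycleOn n hn o m ⟨o + j, by omega⟩ = ⟨o + j + 1, by omega⟩ from
      cycleOn_apply_mid hn h j hj]
    have hlast : (cycleOn n hn (o + j + 1) (m - j - 1) ⟨o + m, by omega⟩).val = o + j + 1 :=
      cycleOn_val_last hn hfit2 _ (show (o:ℕ) + m = (o + j + 1) + (m - j - 1) by omega)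
    rw [cycleOn_apply_of_gt hn hfit1 _ (by rw [hlast]; omega), hlast]
  · rw [Equiv.swap_apply_of_ne_of_ne (Fin.ne_of_val_ne (show x.val ≠ o + j by omega))
        (Fin.ne_of_val_ne (show x.val ≠ o + m by omega)),
      cycleOn_apply_of_gt hn h x (by omega),
      cycleOn_apply_of_gt hn hfit2 x (by omega),
      cycleOn_apply_of_gt hn hfit1 x (by omega)]

end Split

lemma dF_canon {n : ℕ} (hn : 0 < n) (l : List ℕ) (hfit : offs l ≤ n) :
    dF n (canonicalPermAux n hn 0 l) ≤ n - l.sum := by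
  set T := Finset.univ.filter (fun x : Fin n => ¬ Inr 0 l x.val) with hT
  have hTcard : T.card = n - l.sum := by
    rw [hT, Finset.filter_not, Finset.card_sdiff_of_subset (Finset.filter_subset _ _),
      card_Inr l 0 (by omega), Finset.card_univ, Fintype.card_fin]
  have hinj : ∀ f ∈ FixS n (canonicalPermAux n hn 0 l), (∀ x ∈ T, f x = 0) → f = 0 := by
    intro f hf h0
    funext x
    refine canon_fix_zero hn l 0 (by omega) f hf ?_ x
    intro y hy
    exact h0 y (by simp [hT, hy])
  have := finrank_le_card_of_restrict_inj n (FixS n (canonicalPermAux n hn 0 l)) T hinj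
  rw [hTcard] at this
  exact this

lemma PP_eq_zero_of_small_dF (n : ℕ) : ∀ (k : ℕ) (B : Fin n) (π : Equiv.Perm (Fin n)),
    dF n π + k < n → (PP n k B).coeff π = 0 := by
  intro k
  induction k with
  | zero =>
    intro B π hd
    have hne : π ≠ 1 := by
      intro h; subst h; rw [dF_one] at hd; omega
    rw [PP_zero_apply]; simp [hne]
  | succ k ih =>
    intro B π hd
    rw [PP_succ_apply]
    refine Finset.sum_eq_zero fun b _ => Finset.sum_eq_zero fun s _ => ?_
    refine ih b (π * Equiv.swap s b) ?_
    have := dF_mul_swap_le n π s b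
    omega

lemma perm_pow_fix {n : ℕ} (π : Equiv.Perm (Fin n)) (x : Fin n) (h : π x = x) :
    ∀ i : ℕ, (π ^ i) x = x := by
  intro i
  induction i with
  | zero => rfl
  | succ i ih => rw [pow_succ', Equiv.Perm.mul_apply, ih, h]

lemma decompose_last_pos : ∀ (l : List ℕ), l.sum ≠ 0 →
    ∃ l₀ m z, l = l₀ ++ m :: z ∧ 0 < m ∧ (∀ x ∈ z, x = 0) := by
  intro l
  induction l using List.reverseRecOn with
  | nil => simp
  | append_singleton ys a ih =>
    intro hs
    rcases Nat.eq_zero_or_pos a with rfl | ha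
    · have hys : ys.sum ≠ 0 := by simpa using hs
      obtain ⟨l₀, m, z, rfl, hm, hz⟩ := ih hys
      refine ⟨l₀, m, z ++ [0], by simp, hm, ?_⟩
      intro x hx
      rcases List.mem_append.mp hx with h | h
      · exact hz x h
      · simpa using h
    · exact ⟨ys, a, [], by simp, ha, by simp⟩

lemma main_count {n : ℕ} (hn : 0 < n) : ∀ (k : ℕ) (l : List ℕ) (B : Fin n),
    offs l ≤ n → l.sum = k →
    (PP n k B).coeff (canonicalPermAux n hn 0 l)
      = if (∀ x : Fin n, canonicalPermAux n hn 0 l x ≠ x → x ≤ B)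
        then (((l.map catalan).prod : ℕ) : ℚ) else 0 := by
  intro k
  induction k with
  | zero =>
    intro l B hfit hsum
    have hall : ∀ x ∈ l, x = 0 := by
      intro x hx
      have := List.sum_eq_zero_iff.mp hsum
      exact this x hx
    have hone : canonicalPermAux n hn 0 l = 1 := canonAux_zeros hn l 0 (by omega) hall
    rw [hone, PP_zero_apply, if_pos rfl, if_pos (by intro x hx; simp at hx)]
    have : (l.map catalan).prod = 1 := by
      refine List.prod_eq_one ?_
      intro y hy
      obtain ⟨x, hx, rfl⟩ := List.mem_map.mp hy
      rw [hall x hx, catalan_zero]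
    rw [this, Nat.cast_one]
  | succ K ih =>
    intro l B hfit hsum
    obtain ⟨l₀, m, z, rfl, hm, hz⟩ := decompose_last_pos l (by omega)
    set o := offs l₀ with ho
    set l₁ := l₀ ++ [m] with hl₁
    have hzsum : z.sum = 0 := List.sum_eq_zero hz
    have hoffsz : offs (l₀ ++ m :: z) = o + m + 1 + offs z := by
      rw [offs_append, offs_cons]; omega
    have hoffs1 : offs l₁ = o + m + 1 := by
      rw [hl₁, offs_append]; simp [offs_cons]; omega
    have hfit1 : offs l₁ ≤ n := by omega
    have hMn : o + m < n := by omega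
    have hsum1 : l₁.sum = K + 1 := by
      rw [hl₁, List.sum_append, List.sum_cons]
      rw [List.sum_append, List.sum_cons, hzsum] at hsum
      simpa using hsum
    -- replace l by l₁
    have hcanonz : canonicalPermAux n hn 0 (l₀ ++ m :: z) = canonicalPermAux n hn 0 l₁ := by
      rw [canonAux_append hn l₀ (m :: z) 0, canonAux_append hn l₀ [m] 0]
      congr 1
      show cycleOn n hn (0 + o) m * canonicalPermAux n hn (0 + o + m + 1) z
        = cycleOn n hn (0 + o) m * canonicalPermAux n hn (0 + o + m + 1) []
      rw [canonAux_zeros hn z (0 + o + m + 1) (by omega) hz]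
      rfl
    have hprodz : ((l₀ ++ m :: z).map catalan).prod = (l₁.map catalan).prod := by
      rw [hl₁]
      simp only [List.map_append, List.prod_append, List.map_cons, List.prod_cons,
        List.map_nil, List.prod_nil]
      have : (z.map catalan).prod = 1 := by
        refine List.prod_eq_one ?_
        intro y hy
        obtain ⟨x, hx, rfl⟩ := List.mem_map.mp hy
        rw [hz x hx, catalan_zero]
      rw [this, mul_one]
    rw [hcanonz, hprodz]
    set σ := canonicalPermAux n hn 0 l₁ with hσdef
    set A := canonicalPermAux n hn 0 l₀ with hA
    have hσ : σ = A * cycleOn n hn o m := by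
      rw [hσdef, hl₁, canonAux_append hn l₀ [m] 0]
      congr 1
      show cycleOn n hn (0 + o) m * canonicalPermAux n hn (0 + o + m + 1) [] = _
      rw [zero_add]
      exact mul_one _
    have hfixA : ∀ x : Fin n, o ≤ x.val → A x = x := by
      intro x hx
      exact canonAux_fix_high hn l₀ 0 (by omega) x (by omega)
    set M : Fin n := ⟨o + m, hMn⟩ with hM
    -- σ on the last block
    have hblock : ∀ x : Fin n, o ≤ x.val → x.val ≤ o + m → σ x = cycleOn n hn o m x := by
      intro x h1 h2
      rw [hσ, Equiv.Perm.mul_apply]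
      have := cycleOn_mem_range hn hMn x h1 h2
      exact hfixA _ (by omega)
    have hσM : σ M = ⟨o, by omega⟩ := by
      rw [hblock M (by simp [hM]) (by simp [hM]), hM, cycleOn_apply_last hn hMn]
    have hσM_ne : σ M ≠ M := by
      rw [hσM]
      intro hc
      have := congrArg Fin.val hc
      simp [hM] at this
      omega
    have hsupp : ∀ x : Fin n, σ x ≠ x → x.val ≤ o + m := by
      intro x hx
      by_contra hc
      exact hx (canonAux_fix_high hn l₁ 0 (by omega) x (by omega))
    have horbit : ∀ i : ℕ, o ≤ ((σ ^ i) M).val ∧ ((σ ^ i) M).val ≤ o + m := by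
      intro i
      induction i with
      | zero => simp [hM]
      | succ i ihi =>
        rw [pow_succ', Equiv.Perm.mul_apply]
        rw [hblock _ ihi.1 ihi.2]
        exact cycleOn_mem_range hn hMn _ ihi.1 ihi.2
    have hdF : dF n σ ≤ n - (K + 1) := by
      have := dF_canon hn l₁ hfit1
      rwa [hsum1] at this
    have hKn : K + 1 < n := by
      have := offs_eq_sum_add_length l₁
      have hlen : 0 < l₁.length := by rw [hl₁]; simp
      omega
    -- the three kill lemmas
    have hkill_lt : ∀ b s : Fin n, s < b → b < M → (PP n K b).coeff (σ * Equiv.swap s b) = 0 := by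
      intro b s hsb hbM
      refine PP_eq_zero_of_unbounded_support n K b _ M ?_ (by
        intro hc; exact absurd (lt_of_le_of_lt hc hbM) (lt_irrefl _))
      rw [Equiv.Perm.mul_apply, Equiv.swap_apply_of_ne_of_ne
        (Ne.symm (ne_of_lt (hsb.trans hbM))) (Ne.symm (ne_of_lt hbM))]
      exact hσM_ne
    have hkill_gt : ∀ b s : Fin n, s < b → M < b → (PP n K b).coeff (σ * Equiv.swap s b) = 0 := by
      intro b s hsb hMb
      have hfixb : σ b = b := by
        refine canonAux_fix_high hn l₁ 0 (by omega) b ?_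
        rw [Fin.lt_def] at hMb
        simp [hM] at hMb
        omega
      have hmerge := dF_lt_of_merge n σ s b (ne_of_lt hsb) (fun i => by
        rw [perm_pow_fix σ b hfixb i]; exact Ne.symm (ne_of_lt hsb))
      refine PP_eq_zero_of_small_dF n K b _ ?_
      omega
    have hkill_low : ∀ s : Fin n, s.val < o → (PP n K M).coeff (σ * Equiv.swap s M) = 0 := by
      intro s hs
      have hmerge := dF_lt_of_merge n σ s M
        (by intro hc; have := congrArg Fin.val hc; simp [hM] at this; omega)
        (fun i => by
          intro hc
          have := (horbit i).1
          rw [hc] at this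
          omega)
      refine PP_eq_zero_of_small_dF n K M _ ?_
      omega
    -- the good terms
    have hgood : ∀ s : Fin n, o ≤ s.val → s.val < o + m →
        (PP n K M).coeff (σ * Equiv.swap s M)
          = (((l₀.map catalan).prod * (catalan (s.val - o) * catalan (m - (s.val - o) - 1)) : ℕ) : ℚ) := by
      intro s h1 h2
      set j := s.val - o with hj
      have hs : s = ⟨o + j, by omega⟩ := Fin.ext (show s.val = o + j by omega)
      have hsplit : σ * Equiv.swap s M = canonicalPermAux n hn 0 (l₀ ++ [j, m - j - 1]) := by
        rw [hσ, hs, hM, mul_assoc, cycleOn_split hn hMn j (by omega)]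
        rw [canonAux_append hn l₀ [j, m - j - 1] 0]
        congr 1
        show _ = cycleOn n hn (0 + o) j *
          (cycleOn n hn (0 + o + j + 1) (m - j - 1) * canonicalPermAux n hn _ [])
        rw [zero_add]
        show cycleOn n hn o j * cycleOn n hn (o + j + 1) (m - j - 1) = _
        rw [show canonicalPermAux n hn (o + j + 1 + (m - j - 1) + 1) [] = 1 from rfl,
          mul_one]
      rw [hsplit]
      have hoffs' : offs (l₀ ++ [j, m - j - 1]) = o + m + 1 := by
        rw [offs_append]
        show o + (j + 1 + (m - j - 1 + 1 + 0)) = o + m + 1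
        omega
      have hsum' : (l₀ ++ [j, m - j - 1]).sum = K := by
        rw [List.sum_append]
        show l₀.sum + (j + (m - j - 1 + 0)) = K
        have : l₀.sum + m = K + 1 := by
          rw [hl₁, List.sum_append] at hsum1
          simpa using hsum1
        omega
      rw [ih (l₀ ++ [j, m - j - 1]) M (by omega) hsum']
      rw [if_pos]
      · congr 1
        rw [List.map_append, List.prod_append]
        congr 1
        simp
      · intro x hx
        have : x.val < offs (l₀ ++ [j, m - j - 1]) := by
          by_contra hc
          exact hx (canonAux_fix_high hn _ 0 (by omega) x (by omega))
        rw [Fin.le_def]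
        simp only [hM]
        omega
    -- now assemble
    rw [PP_succ_apply]
    by_cases hMB : M ≤ B
    · rw [if_pos (by
        intro x hx
        refine le_trans ?_ hMB
        rw [Fin.le_def]
        simp only [hM]
        exact hsupp x hx)]
      rw [Finset.sum_eq_single_of_mem M (by simp [hMB])]
      swap
      · intro b hb hbM
        simp only [Finset.mem_filter, Finset.mem_univ, true_and] at hb
        refine Finset.sum_eq_zero fun s hs => ?_
        simp only [Finset.mem_filter, Finset.mem_univ, true_and] at hs
        rcases lt_or_gt_of_ne hbM with h | h
        · exact hkill_lt b s hs h
        · exact hkill_gt b s hs h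
      -- inner sum at M
      have hsub : Finset.univ.filter (fun s : Fin n => o ≤ s.val ∧ s < M)
          ⊆ Finset.univ.filter (fun s : Fin n => s < M) := by
        intro s hs
        simp only [Finset.mem_filter, Finset.mem_univ, true_and] at hs ⊢
        exact hs.2
      rw [← Finset.sum_subset hsub (by
        intro s hs hns
        simp only [Finset.mem_filter, Finset.mem_univ, true_and] at hs hns
        exact hkill_low s (by omega))]
      have hbij : ∑ s ∈ Finset.univ.filter (fun s : Fin n => o ≤ s.val ∧ s < M),
          (PP n K M).coeff (σ * Equiv.swap s M)
          = ∑ jj ∈ Finset.range m,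
            (((l₀.map catalan).prod * (catalan jj * catalan (m - jj - 1)) : ℕ) : ℚ) := by
        refine Finset.sum_bij' (fun s _ => s.val - o) (fun jj hjj => ⟨o + jj, by
          simp only [Finset.mem_range] at hjj; omega⟩) ?_ ?_ ?_ ?_ ?_
        · intro s hs
          simp only [Finset.mem_filter, Finset.mem_univ, true_and, Fin.lt_def, hM] at hs
          simp only [Finset.mem_range]
          omega
        · intro jj hjj
          simp only [Finset.mem_range] at hjj
          simp only [Finset.mem_filter, Finset.mem_univ, true_and, Fin.lt_def, hM]
          exact ⟨Nat.le_add_right o jj, by show o + jj < o + m; omega⟩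
        · intro s hs
          simp only [Finset.mem_filter, Finset.mem_univ, true_and] at hs
          exact Fin.ext (show o + (s.val - o) = s.val by omega)
        · intro jj hjj
          show o + jj - o = jj
          omega
        · intro s hs
          simp only [Finset.mem_filter, Finset.mem_univ, true_and, Fin.lt_def, hM] at hs
          exact hgood s hs.1 hs.2
      rw [hbij]
      -- Catalan recursion
      have hcat : ∑ jj ∈ Finset.range m, catalan jj * catalan (m - jj - 1) = catalan m := by
        have h1 : catalan ((m - 1) + 1)
            = ∑ i : Fin (m - 1 + 1), (catalan i * catalan ((m - 1) - i) : ℕ) := catalan_succ _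
        have h2 : (m - 1) + 1 = m := by omega
        rw [h2] at h1
        rw [Fin.sum_univ_eq_sum_range (fun i => catalan i * catalan (m - 1 - i)) m] at h1
        rw [h1]
        refine Finset.sum_congr rfl fun jj hjj => ?_
        congr 2
        omega
      have hfinal : ((l₁.map catalan).prod : ℕ)
          = (l₀.map catalan).prod * catalan m := by
        rw [hl₁, List.map_append, List.prod_append]
        simp
      rw [hfinal]
      push_cast
      rw [← Finset.mul_sum, ← hcat]
      push_cast
      ring
    · rw [if_neg (by
        intro hc
        exact hMB (hc M hσM_ne))]
      refine Finset.sum_eq_zero fun b hb => Finset.sum_eq_zero fun s hs => ?_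
      simp only [Finset.mem_filter, Finset.mem_univ, true_and] at hb hs
      have hbM : b < M := lt_of_le_of_lt hb (lt_of_not_ge hMB)
      exact hkill_lt b s hs hbM


/-- Top class coefficients of complete homogeneous symmetric functions in Jucys–Murphy
elements: for a partition `μ` with `|μ| = k` and any `n ≥ wt(μ)`, the coefficient of the
canonical permutation `σ_μ` in `h_k(J_1,…,J_n)` equals `∏ᵢ Cat_{μᵢ}`; in particular it is
independent of `n`. -/
theorem top_class_coefficient_complete (n k : ℕ) (hn : 0 < n)
    (mu : List ℕ) (hmu : ∀ x ∈ mu, 0 < x) (hsort : mu.Pairwise (· ≥ ·))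
    (hk : mu.sum = k) (hwt : mu.sum + mu.length ≤ n) :
    (hEval n k).coeff (canonicalPerm n hn mu) = (((mu.map catalan).prod : ℕ) : ℚ) := by
  set B : Fin n := ⟨n - 1, by omega⟩ with hB
  have hle : ∀ x : Fin n, x ≤ B := by
    intro x
    rw [Fin.le_def]
    show x.val ≤ n - 1
    have := x.isLt
    omega
  have hEvalPP : hEval n k = PP n k B := by
    rw [hEval, PP, TTset]
    congr 1
    apply Finset.filter_congr
    intro t _
    exact ⟨fun h => ⟨h, fun i => hle _⟩, fun h => h.1⟩
  have hfit : offs mu ≤ n := by rw [offs_eq_sum_add_length]; omega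
  rw [hEvalPP, canonicalPerm, main_count hn k mu B hfit hk, if_pos (fun x _ => hle x)]
end
end
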